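/- arXiv:1407.8543 — 4 statements merged into one kernel-verified Lean document; each statement's English description precedes it below -/
import Mathlib

section
/- Let n be a positive integer, c_{jk} (1 ≤ j < k ≤ n) and ℓ_1,…,ℓ_n fixed integers, and let (C(c,ℓ), ρ) be the corresponding Grossberg–Karshon twisted cube. Then (C(c,ℓ), ρ) is untwisted if and only if m_{σ,k} ≥ 0 for every σ ∈ {+,−}^n and every k with 1 ≤ k ≤ n. -/
open Finset

/-- `A_j(x) = ℓ_j − Σ_{k>j} c_{jk} x_k` (for the last index the sum is empty). -/
noncomputable def GKA {n : ℕ} (c : Fin n → Fin n → ℤ) (ℓ : Fin n → ℤ)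
    (j : Fin n) (x : Fin n → ℝ) : ℝ :=
  (ℓ j : ℝ) - ∑ k ∈ Finset.univ.filter (fun k : Fin n => j < k), (c j k : ℝ) * x k

/-- The Grossberg–Karshon twisted cube `C(c,ℓ)`. -/
noncomputable def GKcube {n : ℕ} (c : Fin n → Fin n → ℤ) (ℓ : Fin n → ℤ) :
    Set (Fin n → ℝ) :=
  {x | ∀ j : Fin n, (GKA c ℓ j x < x j ∧ x j < 0) ∨ (0 ≤ x j ∧ x j ≤ GKA c ℓ j x)}

/-- `sgn(t) = 1` for `t < 0` and `−1` for `t ≥ 0`. -/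
noncomputable def GKsgn (t : ℝ) : ℝ := if t < 0 then 1 else -1

open Classical in
/-- The density function `ρ`: `ρ(x) = (−1)^n ∏_k sgn(x_k)` on `C(c,ℓ)`, `0` elsewhere. -/
noncomputable def GKrho {n : ℕ} (c : Fin n → Fin n → ℤ) (ℓ : Fin n → ℤ)
    (x : Fin n → ℝ) : ℝ :=
  if x ∈ GKcube c ℓ then (-1 : ℝ) ^ n * ∏ k : Fin n, GKsgn (x k) else 0

/-- `(C(c,ℓ), ρ)` is untwisted: `C(c,ℓ)` is closed, convex, the convex hull of a
finite set, and `ρ ≡ 1` on `C(c,ℓ)`.  "Twisted" is the negation of this. -/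
noncomputable def GKUntwisted {n : ℕ} (c : Fin n → Fin n → ℤ) (ℓ : Fin n → ℤ) : Prop :=
  IsClosed (GKcube c ℓ) ∧ Convex ℝ (GKcube c ℓ) ∧
  (∃ S : Finset (Fin n → ℝ), GKcube c ℓ = convexHull ℝ (S : Set (Fin n → ℝ))) ∧
  (∀ x ∈ GKcube c ℓ, GKrho c ℓ x = 1)

/-- The Cartier data `m_σ`, defined by downward recursion:
`m_{σ,k} = 0` if `σ_k = +` (encoded `false`), and
`m_{σ,k} = ℓ_k − Σ_{s>k} c_{ks} m_{σ,s}` if `σ_k = −` (encoded `true`). -/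
def GKm {n : ℕ} (c : Fin n → Fin n → ℤ) (ℓ : Fin n → ℤ) (σ : Fin n → Bool)
    (k : Fin n) : ℤ :=
  if σ k then
    ℓ k - ∑ s ∈ (Finset.univ.filter fun s : Fin n => k < s).attach,
      c k s.1 * GKm c ℓ σ s.1
  else 0
termination_by n - k.val
decreasing_by
  have h := s.2
  simp only [Finset.mem_filter, Finset.mem_univ, true_and, Fin.lt_def] at h
  omega

/-- `A` is the Cartan matrix of a complex semisimple Lie algebra of rank `r`,
i.e. a generalized Cartan matrix of finite type: diagonal entries `2`,
nonpositive off-diagonal entries, `A_{ab} = 0 ↔ A_{ba} = 0`, and `A` is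
symmetrizable by positive rationals `d_a` with `(d_a A_{ab})` symmetric
positive definite. -/
def IsCartanMatrix {r : ℕ} (A : Matrix (Fin r) (Fin r) ℤ) : Prop :=
  (∀ a, A a a = 2) ∧
  (∀ a b, a ≠ b → A a b ≤ 0) ∧
  (∀ a b, A a b = 0 ↔ A b a = 0) ∧
  (∃ d : Fin r → ℚ, (∀ a, 0 < d a) ∧
    (∀ a b, d a * (A a b : ℚ) = d b * (A b a : ℚ)) ∧
    (∀ x : Fin r → ℚ, x ≠ 0 → 0 < ∑ a, ∑ b, x a * d a * (A a b : ℚ) * x b))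

/-- `(w_0, …, w_s)` is a diagram walk followed by the condition that the final
root appears in `λ`: a `λ`-walk.  (Successive entries are distinct and adjacent
in the Dynkin diagram, and `λ_{w_s} > 0`.) -/
def IsLambdaWalkSeq {r : ℕ} (A : Matrix (Fin r) (Fin r) ℤ) (lam : Fin r → ℤ)
    {s : ℕ} (w : Fin (s + 1) → Fin r) : Prop :=
  (∀ t : Fin s, w t.castSucc ≠ w t.succ ∧ A (w t.castSucc) (w t.succ) < 0) ∧
  0 < lam (w (Fin.last s))

/-- `(w_0, w_1, …, w_s)` is a hesitant `λ`-walk: `s ≥ 1`, `w_0 = w_1`, the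
walking component `(w_1, …, w_s)` is a diagram walk, and `λ_{w_s} > 0`. -/
def IsHesitantLambdaWalkSeq {r : ℕ} (A : Matrix (Fin r) (Fin r) ℤ)
    (lam : Fin r → ℤ) {s : ℕ} (w : Fin (s + 1) → Fin r) : Prop :=
  1 ≤ s ∧ w 0 = w 1 ∧
  (∀ t : Fin s, 1 ≤ t.val →
    (w t.castSucc ≠ w t.succ ∧ A (w t.castSucc) (w t.succ) < 0)) ∧
  0 < lam (w (Fin.last s))

/-- The word `i = (i_1, …, i_n)` is hesitant-`λ`-walk-avoiding: no subword
(subsequence, given by a strictly increasing reindexing `j`) is a hesitant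
`λ`-walk. -/
def HesitantLambdaWalkAvoiding {r n : ℕ} (A : Matrix (Fin r) (Fin r) ℤ)
    (lam : Fin r → ℤ) (i : Fin n → Fin r) : Prop :=
  ¬ ∃ (s : ℕ) (j : Fin (s + 1) → Fin n), StrictMono j ∧
      IsHesitantLambdaWalkSeq A lam (i ∘ j)

/-- Minimality of a hesitant `λ`-walk `(w_0, …, w_s)`: the entries of the
walking component `w_1, …, w_s` are pairwise distinct, and if `s ≥ 2` then
`λ_{w_t} = 0` for `0 ≤ t ≤ s − 1`. -/
def MinimalHLW {r s : ℕ} (lam : Fin r → ℤ) (w : Fin (s + 1) → Fin r) : Prop :=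
  (∀ p q : Fin (s + 1), 1 ≤ p.val → 1 ≤ q.val → w p = w q → p = q) ∧
  (2 ≤ s → ∀ t : Fin (s + 1), t.val ≤ s - 1 → lam (w t) = 0)

section GKaux

variable {n : ℕ} (c : Fin n → Fin n → ℤ) (ℓ : Fin n → ℤ)

lemma GKm_false (σ : Fin n → Bool) (k : Fin n) (h : σ k = false) : GKm c ℓ σ k = 0 := by
  rw [GKm, h]; simp

lemma GKm_congr_aux : ∀ d : ℕ, ∀ (σ σ' : Fin n → Bool) (k : Fin n), n - k.val ≤ d →
    (∀ s : Fin n, k ≤ s → σ s = σ' s) → GKm c ℓ σ k = GKm c ℓ σ' k := by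
  intro d
  induction d with
  | zero => intro σ σ' k hk _; have := k.isLt; omega
  | succ d ih =>
    intro σ σ' k hk hag
    rw [GKm, GKm, hag k le_rfl]
    split
    · congr 1
      apply Finset.sum_congr rfl
      intro s _
      have hs := s.2
      simp only [Finset.mem_filter, Finset.mem_univ, true_and] at hs
      rw [ih σ σ' s.1 (by have := hs; have h2 : k.val < s.1.val := hs; omega)
        (fun t ht => hag t (le_of_lt (lt_of_lt_of_le hs ht)))]
    · rfl

lemma GKm_congr (σ σ' : Fin n → Bool) (k : Fin n)
    (h : ∀ s : Fin n, k ≤ s → σ s = σ' s) : GKm c ℓ σ k = GKm c ℓ σ' k :=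
  GKm_congr_aux c ℓ (n - k.val) σ σ' k le_rfl h

lemma GKm_true (σ : Fin n → Bool) (k : Fin n) (h : σ k = true) :
    ((GKm c ℓ σ k : ℤ) : ℝ) =
      (ℓ k : ℝ) - ∑ s ∈ Finset.univ.filter (fun s : Fin n => k < s),
        (c k s : ℝ) * ((GKm c ℓ σ s : ℤ) : ℝ) := by
  conv_lhs => rw [GKm]
  rw [if_pos h]
  push_cast
  rw [← Finset.sum_attach (Finset.univ.filter (fun s : Fin n => k < s))
    (fun s => (c k s : ℝ) * ((GKm c ℓ σ s : ℤ) : ℝ))]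

lemma GKA_eq_m (σ : Fin n → Bool) (j : Fin n) (x : Fin n → ℝ)
    (hx : ∀ s : Fin n, j < s → x s = ((GKm c ℓ σ s : ℤ) : ℝ)) :
    GKA c ℓ j x = ((GKm c ℓ (Function.update σ j true) j : ℤ) : ℝ) := by
  rw [GKm_true c ℓ _ j (by simp)]
  unfold GKA
  congr 1
  apply Finset.sum_congr rfl
  intro s hs
  simp only [Finset.mem_filter, Finset.mem_univ, true_and] at hs
  rw [hx s hs, GKm_congr c ℓ (Function.update σ j true) σ s
    (fun t ht => Function.update_of_ne (by intro he; subst he; exact absurd (lt_of_lt_of_le hs ht) (lt_irrefl _)) _ _)]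

def GKD : Set (Fin n → ℝ) := {x | ∀ k : Fin n, 0 ≤ x k ∧ x k ≤ GKA c ℓ k x}

lemma GKA_continuous (j : Fin n) : Continuous (fun x : Fin n → ℝ => GKA c ℓ j x) := by
  unfold GKA
  exact continuous_const.sub (continuous_finset_sum _ fun s _ =>
    continuous_const.mul (continuous_apply s))

lemma isClosed_GKD : IsClosed (GKD c ℓ) := by
  have : GKD c ℓ = ⋂ k : Fin n, ({x : Fin n → ℝ | 0 ≤ x k} ∩ {x | x k ≤ GKA c ℓ k x}) := by
    ext x; simp [GKD, Set.mem_iInter, forall_and]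
  rw [this]
  exact isClosed_iInter fun k => (isClosed_le continuous_const (continuous_apply k)).inter
    (isClosed_le (continuous_apply k) (GKA_continuous c ℓ k))

lemma GKA_affine (j : Fin n) (x y : Fin n → ℝ) (a b : ℝ) (hab : a + b = 1) :
    GKA c ℓ j (a • x + b • y) = a * GKA c ℓ j x + b * GKA c ℓ j y := by
  unfold GKA
  have h1 : ∑ k ∈ Finset.univ.filter (fun k : Fin n => j < k), (c j k : ℝ) * (a • x + b • y) k
      = a * (∑ k ∈ Finset.univ.filter (fun k : Fin n => j < k), (c j k : ℝ) * x k)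
        + b * (∑ k ∈ Finset.univ.filter (fun k : Fin n => j < k), (c j k : ℝ) * y k) := by
    rw [Finset.mul_sum, Finset.mul_sum, ← Finset.sum_add_distrib]
    apply Finset.sum_congr rfl
    intro s _
    simp only [Pi.add_apply, Pi.smul_apply, smul_eq_mul]
    ring
  rw [h1]
  have : a * (ℓ j : ℝ) + b * (ℓ j : ℝ) = (ℓ j : ℝ) := by linear_combination (ℓ j : ℝ) * hab
  linarith [this]

lemma convex_GKD : Convex ℝ (GKD c ℓ) := by
  intro x hx y hy a b ha hb hab
  intro k
  have hA := GKA_affine c ℓ k x y a b hab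
  constructor
  · have : (a • x + b • y) k = a * x k + b * y k := by simp [smul_eq_mul]
    rw [this]
    exact add_nonneg (mul_nonneg ha (hx k).1) (mul_nonneg hb (hy k).1)
  · have h2 : (a • x + b • y) k = a * x k + b * y k := by simp [smul_eq_mul]
    rw [h2, hA]
    exact add_le_add (mul_le_mul_of_nonneg_left (hx k).2 ha)
      (mul_le_mul_of_nonneg_left (hy k).2 hb)

lemma GKA_comb (k0 : Fin n) (lam : (Fin n → Bool) → ℝ) (hs : ∑ σ, lam σ = 1)
    (x : Fin n → ℝ)
    (hx : ∀ s : Fin n, k0 < s → x s = ∑ σ, lam σ * ((GKm c ℓ σ s : ℤ) : ℝ)) :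
    GKA c ℓ k0 x = ∑ σ, lam σ * ((GKm c ℓ (Function.update σ k0 true) k0 : ℤ) : ℝ) := by
  have key : ∀ σ : Fin n → Bool,
      ((GKm c ℓ (Function.update σ k0 true) k0 : ℤ) : ℝ)
        = (ℓ k0 : ℝ) - ∑ k ∈ Finset.univ.filter (fun k : Fin n => k0 < k),
            (c k0 k : ℝ) * ((GKm c ℓ σ k : ℤ) : ℝ) := by
    intro σ
    rw [← GKA_eq_m c ℓ σ k0 (fun s => ((GKm c ℓ σ s : ℤ) : ℝ)) (fun s _ => rfl)]
    rfl
  simp only [key]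
  unfold GKA
  have h1 : ∑ k ∈ Finset.univ.filter (fun k : Fin n => k0 < k), (c k0 k : ℝ) * x k
      = ∑ σ, lam σ * ∑ k ∈ Finset.univ.filter (fun k : Fin n => k0 < k),
          (c k0 k : ℝ) * ((GKm c ℓ σ k : ℤ) : ℝ) := by
    calc ∑ k ∈ Finset.univ.filter (fun k : Fin n => k0 < k), (c k0 k : ℝ) * x k
        = ∑ k ∈ Finset.univ.filter (fun k : Fin n => k0 < k),
            ∑ σ, lam σ * ((c k0 k : ℝ) * ((GKm c ℓ σ k : ℤ) : ℝ)) := by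
          apply Finset.sum_congr rfl
          intro k hk
          simp only [Finset.mem_filter, Finset.mem_univ, true_and] at hk
          rw [hx k hk, Finset.mul_sum]
          apply Finset.sum_congr rfl
          intro σ _
          ring
      _ = ∑ σ, ∑ k ∈ Finset.univ.filter (fun k : Fin n => k0 < k),
            lam σ * ((c k0 k : ℝ) * ((GKm c ℓ σ k : ℤ) : ℝ)) := Finset.sum_comm
      _ = ∑ σ, lam σ * ∑ k ∈ Finset.univ.filter (fun k : Fin n => k0 < k),
            (c k0 k : ℝ) * ((GKm c ℓ σ k : ℤ) : ℝ) := by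
          apply Finset.sum_congr rfl
          intro σ _
          rw [Finset.mul_sum]
  rw [h1]
  rw [Finset.sum_congr rfl (fun σ _ => mul_sub (lam σ) ((ℓ k0 : ℝ)) _),
    Finset.sum_sub_distrib, ← Finset.sum_mul, hs, one_mul]

lemma GKdecomp : ∀ (d j : ℕ), j + d = n →
    (∀ (σ : Fin n → Bool) (k : Fin n), j ≤ k.val → 0 ≤ GKm c ℓ σ k) →
    ∀ x : Fin n → ℝ, (∀ k : Fin n, j ≤ k.val → 0 ≤ x k ∧ x k ≤ GKA c ℓ k x) →
    ∃ lam : (Fin n → Bool) → ℝ, (∀ σ, 0 ≤ lam σ) ∧ (∑ σ, lam σ) = 1 ∧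
      ∀ k : Fin n, j ≤ k.val → x k = ∑ σ, lam σ * ((GKm c ℓ σ k : ℤ) : ℝ) := by
  intro d
  induction d with
  | zero =>
    intro j hj _ x _
    refine ⟨fun σ => if σ = (fun _ => false) then 1 else 0, ?_, ?_, ?_⟩
    · intro σ; dsimp only; split <;> norm_num
    · rw [Finset.sum_ite_eq' Finset.univ (fun _ => false) (fun _ => (1:ℝ))]
      simp
    · intro k hk; have := k.isLt; omega
  | succ d ih =>
    intro j hj H x hx
    have hjn : j < n := by omega
    set k0 : Fin n := ⟨j, hjn⟩ with hk0
    obtain ⟨lam, hl0, hl1, hlx⟩ := ih (j+1) (by omega)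
      (fun σ k hk => H σ k (by omega)) x (fun k hk => hx k (by omega))
    have hAx : GKA c ℓ k0 x
        = ∑ σ, lam σ * ((GKm c ℓ (Function.update σ k0 true) k0 : ℤ) : ℝ) :=
      GKA_comb c ℓ k0 lam hl1 x (fun s hs => hlx s (by exact hs))
    have hA0 : 0 ≤ GKA c ℓ k0 x := by
      rw [hAx]
      apply Finset.sum_nonneg
      intro σ _
      apply mul_nonneg (hl0 σ)
      exact_mod_cast H (Function.update σ k0 true) k0 le_rfl
    obtain ⟨hx0, hx1⟩ := hx k0 le_rfl
    set A := GKA c ℓ k0 x with hA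
    set t : ℝ := if A = 0 then 0 else x k0 / A with ht
    have ht0 : 0 ≤ t := by
      rw [ht]; split
      · exact le_rfl
      · exact div_nonneg hx0 hA0
    have ht1 : t ≤ 1 := by
      rw [ht]; split
      · norm_num
      · rw [div_le_one (lt_of_le_of_ne hA0 (Ne.symm (by assumption)))]
        exact hx1
    have hxk : x k0 = t * A := by
      rw [ht]; split
      · rename_i h0; rw [h0] at hx1; linarith
      · rw [div_mul_cancel₀]; assumption
    refine ⟨fun τ => ∑ σ, lam σ * ((if Function.update σ k0 true = τ then t else 0)
      + (if Function.update σ k0 false = τ then 1 - t else 0)), ?_, ?_, ?_⟩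
    · intro τ
      apply Finset.sum_nonneg
      intro σ _
      apply mul_nonneg (hl0 σ)
      have h1 : (0:ℝ) ≤ if Function.update σ k0 true = τ then t else 0 := by
        split; exacts [ht0, le_rfl]
      have h2 : (0:ℝ) ≤ if Function.update σ k0 false = τ then 1 - t else 0 := by
        split; exacts [by linarith, le_rfl]
      exact add_nonneg h1 h2
    · rw [Finset.sum_comm]
      have this1 : ∀ σ : Fin n → Bool, ∑ τ : Fin n → Bool,
          lam σ * ((if Function.update σ k0 true = τ then t else 0)
            + (if Function.update σ k0 false = τ then 1 - t else 0)) = lam σ := by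
        intro σ
        rw [← Finset.mul_sum, Finset.sum_add_distrib,
          Finset.sum_ite_eq Finset.univ (Function.update σ k0 true) (fun _ => t),
          Finset.sum_ite_eq Finset.univ (Function.update σ k0 false) (fun _ => (1-t))]
        simp
      rw [Finset.sum_congr rfl (fun σ _ => this1 σ), hl1]
    · intro k hk
      have expand : ∑ τ : Fin n → Bool, (∑ σ, lam σ * ((if Function.update σ k0 true = τ then t else 0)
          + (if Function.update σ k0 false = τ then 1 - t else 0))) * ((GKm c ℓ τ k : ℤ) : ℝ)
          = ∑ σ, lam σ * (t * ((GKm c ℓ (Function.update σ k0 true) k : ℤ) : ℝ)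
            + (1-t) * ((GKm c ℓ (Function.update σ k0 false) k : ℤ) : ℝ)) := by
        rw [Finset.sum_congr rfl (fun τ _ => Finset.sum_mul _ _ _), Finset.sum_comm]
        apply Finset.sum_congr rfl
        intro σ _
        have e : ∀ τ : Fin n → Bool, (lam σ * ((if Function.update σ k0 true = τ then t else 0)
            + (if Function.update σ k0 false = τ then 1 - t else 0))) * ((GKm c ℓ τ k : ℤ) : ℝ)
            = lam σ * ((if Function.update σ k0 true = τ then t * ((GKm c ℓ τ k : ℤ) : ℝ) else 0)
              + (if Function.update σ k0 false = τ then (1-t) * ((GKm c ℓ τ k : ℤ) : ℝ) else 0)) := by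
          intro τ; split_ifs <;> ring
        rw [Finset.sum_congr rfl (fun τ _ => e τ), ← Finset.mul_sum, Finset.sum_add_distrib,
          Finset.sum_ite_eq Finset.univ (Function.update σ k0 true)
            (fun τ => t * ((GKm c ℓ τ k : ℤ) : ℝ)),
          Finset.sum_ite_eq Finset.univ (Function.update σ k0 false)
            (fun τ => (1-t) * ((GKm c ℓ τ k : ℤ) : ℝ))]
        simp
      rw [expand]
      rcases Nat.lt_or_ge j k.val with hlt | hge
      · have hc : ∀ (σ : Fin n → Bool) (b : Bool),
            GKm c ℓ (Function.update σ k0 b) k = GKm c ℓ σ k := by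
          intro σ b
          apply GKm_congr
          intro s hs
          apply Function.update_of_ne
          intro he
          rw [he] at hs
          have : k.val ≤ j := hs
          omega
        rw [hlx k (by omega)]
        apply Finset.sum_congr rfl
        intro σ _
        rw [hc σ true, hc σ false]
        ring
      · have hkk : k = k0 := Fin.ext (by simp [hk0]; omega)
        rw [hkk, hxk, hAx, Finset.mul_sum]
        apply Finset.sum_congr rfl
        intro σ _
        rw [GKm_false c ℓ (Function.update σ k0 false) k0 (by simp)]
        push_cast
        ring

lemma cube_in_D : ∀ (d j : ℕ), j + d = n →
    (∀ (σ : Fin n → Bool) (k : Fin n), j ≤ k.val → 0 ≤ GKm c ℓ σ k) →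
    ∀ x ∈ GKcube c ℓ, ∀ k : Fin n, j ≤ k.val → 0 ≤ x k ∧ x k ≤ GKA c ℓ k x := by
  intro d
  induction d with
  | zero => intro j hj _ x _ k hk; have := k.isLt; omega
  | succ d ih =>
    intro j hj H x hxC k hk
    have hjn : j < n := by omega
    rcases Nat.lt_or_ge j k.val with hlt | hge
    · exact ih (j+1) (by omega) (fun σ s hs => H σ s (by omega)) x hxC k (by omega)
    · have hkk : k = ⟨j, hjn⟩ := Fin.ext (by simp only [Fin.val_mk]; omega)
      have hD' : ∀ s : Fin n, j + 1 ≤ s.val → 0 ≤ x s ∧ x s ≤ GKA c ℓ s x :=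
        fun s hs => ih (j+1) (by omega) (fun σ u hu => H σ u (by omega)) x hxC s hs
      obtain ⟨lam, hl0, hl1, hlx⟩ := GKdecomp c ℓ d (j+1) (by omega)
        (fun σ u hu => H σ u (by omega)) x hD'
      have hA0 : 0 ≤ GKA c ℓ k x := by
        rw [hkk]
        rw [GKA_comb c ℓ ⟨j, hjn⟩ lam hl1 x (fun s hs => hlx s (by exact hs))]
        apply Finset.sum_nonneg
        intro σ _
        apply mul_nonneg (hl0 σ)
        exact_mod_cast H (Function.update σ ⟨j, hjn⟩ true) ⟨j, hjn⟩ le_rfl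
      rcases hxC k with ⟨h1, h2⟩ | h
      · linarith
      · exact h

lemma cube_eq_D (H : ∀ (σ : Fin n → Bool) (k : Fin n), 0 ≤ GKm c ℓ σ k) :
    GKcube c ℓ = GKD c ℓ := by
  apply Set.eq_of_subset_of_subset
  · intro x hx k
    exact cube_in_D c ℓ n 0 (by omega) (fun σ s _ => H σ s) x hx k (by omega)
  · intro x hx k
    exact Or.inr (hx k)

lemma m_mem_D (H : ∀ (σ : Fin n → Bool) (k : Fin n), 0 ≤ GKm c ℓ σ k)
    (σ : Fin n → Bool) : (fun k => ((GKm c ℓ σ k : ℤ) : ℝ)) ∈ GKD c ℓ := by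
  intro k
  dsimp only
  constructor
  · exact_mod_cast H σ k
  · rw [GKA_eq_m c ℓ σ k _ (fun s _ => rfl)]
    by_cases h : σ k = true
    · have : Function.update σ k true = σ := by
        funext s
        by_cases hs : s = k
        · subst hs; simp [h]
        · simp [Function.update_of_ne hs]
      rw [this]
    · rw [GKm_false c ℓ σ k (by simpa using h)]
      exact_mod_cast H (Function.update σ k true) k

lemma backward (H : ∀ (σ : Fin n → Bool) (k : Fin n), 0 ≤ GKm c ℓ σ k) :
    GKUntwisted c ℓ := by
  have hCD := cube_eq_D c ℓ H
  refine ⟨hCD ▸ isClosed_GKD c ℓ, hCD ▸ convex_GKD c ℓ, ?_, ?_⟩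
  · refine ⟨Finset.image (fun σ : Fin n → Bool => fun k => ((GKm c ℓ σ k : ℤ) : ℝ))
      Finset.univ, ?_⟩
    apply Set.eq_of_subset_of_subset
    · intro x hx
      obtain ⟨lam, hl0, hl1, hlx⟩ := GKdecomp c ℓ n 0 (by omega)
        (fun σ s _ => H σ s) x (by rw [hCD] at hx; exact fun k _ => hx k)
      have hxeq : x = Finset.univ.centerMass lam
          (fun σ : Fin n → Bool => fun k => ((GKm c ℓ σ k : ℤ) : ℝ)) := by
        rw [Finset.centerMass_eq_of_sum_1 _ _ hl1]
        funext k
        rw [hlx k (by omega)]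
        simp [Finset.sum_apply]
      rw [hxeq]
      apply Finset.centerMass_mem_convexHull _ (fun σ _ => hl0 σ) (by rw [hl1]; norm_num)
      intro σ _
      simp only [Finset.coe_image, Set.mem_image, Finset.mem_coe, Finset.mem_univ]
      exact ⟨σ, trivial, rfl⟩
    · apply convexHull_min
      · intro y hy
        simp only [Finset.coe_image, Set.mem_image, Finset.mem_coe] at hy
        obtain ⟨σ, _, rfl⟩ := hy
        rw [hCD]
        exact m_mem_D c ℓ H σ
      · rw [hCD]; exact convex_GKD c ℓ
  · intro x hx
    unfold GKrho
    rw [if_pos hx]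
    have hsg : ∀ k : Fin n, GKsgn (x k) = -1 := by
      intro k
      have h0 : 0 ≤ x k := by rw [hCD] at hx; exact (hx k).1
      unfold GKsgn
      rw [if_neg (not_lt.2 h0)]
    rw [Finset.prod_congr rfl (fun k _ => hsg k), Finset.prod_const]
    simp only [Finset.card_univ, Fintype.card_fin]
    rw [← pow_add]
    exact Even.neg_one_pow ⟨n, rfl⟩

noncomputable def zfun {n : ℕ} (c : Fin n → Fin n → ℤ) (ℓ : Fin n → ℤ)
    (σ : Fin n → Bool) (k0 : Fin n) (t : ℝ) (j : Fin n) : ℝ :=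
  if k0 < j then ((GKm c ℓ σ j : ℤ) : ℝ)
  else if j = k0 then ((GKm c ℓ σ k0 : ℤ) : ℝ) * (2 - t) / 2
  else min ((ℓ j : ℝ) - ∑ s ∈ (Finset.univ.filter fun s : Fin n => j < s).attach,
      (c j s.1 : ℝ) * zfun c ℓ σ k0 t s.1) 0 / 2
termination_by n - j.val
decreasing_by
  have h := s.2
  simp only [Finset.mem_filter, Finset.mem_univ, true_and, Fin.lt_def] at h
  omega

variable (σ : Fin n → Bool) (k0 : Fin n)

lemma zf_gt (t : ℝ) (j : Fin n) (h : k0 < j) :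
    zfun c ℓ σ k0 t j = ((GKm c ℓ σ j : ℤ) : ℝ) := by
  conv_lhs => rw [zfun]
  rw [if_pos h]

lemma zf_eq (t : ℝ) : zfun c ℓ σ k0 t k0 = ((GKm c ℓ σ k0 : ℤ) : ℝ) * (2 - t) / 2 := by
  conv_lhs => rw [zfun]
  rw [if_neg (lt_irrefl k0), if_pos rfl]

lemma zf_lt (t : ℝ) (j : Fin n) (h : j < k0) :
    zfun c ℓ σ k0 t j = min (GKA c ℓ j (zfun c ℓ σ k0 t)) 0 / 2 := by
  conv_lhs => rw [zfun]
  rw [if_neg (by exact fun hc => absurd (lt_trans h hc) (lt_irrefl j)),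
    if_neg (ne_of_lt h)]
  congr 2
  unfold GKA
  congr 1
  rw [Finset.sum_attach (Finset.univ.filter fun s : Fin n => j < s)
    (fun s => (c j s : ℝ) * zfun c ℓ σ k0 t s)]

lemma zf_A_k0 (t : ℝ) (hσ : σ k0 = true) :
    GKA c ℓ k0 (zfun c ℓ σ k0 t) = ((GKm c ℓ σ k0 : ℤ) : ℝ) := by
  rw [GKm_true c ℓ σ k0 hσ]
  unfold GKA
  congr 1
  apply Finset.sum_congr rfl
  intro s hs
  simp only [Finset.mem_filter, Finset.mem_univ, true_and] at hs
  rw [zf_gt c ℓ σ k0 t s hs]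

lemma zf_mem (t : ℝ) (ht0 : 0 < t) (ht1 : t ≤ 1) (hσ : σ k0 = true)
    (hM : GKm c ℓ σ k0 < 0)
    (H' : ∀ (τ : Fin n → Bool) (s : Fin n), k0 < s → 0 ≤ GKm c ℓ τ s) :
    zfun c ℓ σ k0 t ∈ GKcube c ℓ := by
  intro j
  rcases lt_trichotomy k0 j with h | h | h
  · -- j > k0 : like m_mem_D
    right
    have hz : zfun c ℓ σ k0 t j = ((GKm c ℓ σ j : ℤ) : ℝ) := zf_gt c ℓ σ k0 t j h
    have hA : GKA c ℓ j (zfun c ℓ σ k0 t) = ((GKm c ℓ (Function.update σ j true) j : ℤ) : ℝ) :=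
      GKA_eq_m c ℓ σ j _ (fun s hs => zf_gt c ℓ σ k0 t s (lt_trans h hs))
    rw [hz, hA]
    constructor
    · exact_mod_cast H' σ j h
    · by_cases hb : σ j = true
      · have : Function.update σ j true = σ := by
          funext s
          by_cases hs : s = j
          · subst hs; simp [hb]
          · simp [Function.update_of_ne hs]
        rw [this]
      · rw [GKm_false c ℓ σ j (by simpa using hb)]
        exact_mod_cast H' (Function.update σ j true) j h
  · -- j = k0
    subst h
    left
    rw [zf_eq c ℓ σ k0 t, zf_A_k0 c ℓ σ k0 t hσ]
    have hMR : ((GKm c ℓ σ k0 : ℤ) : ℝ) < 0 := by exact_mod_cast hM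
    constructor
    · nlinarith
    · nlinarith
  · -- j < k0
    have hz := zf_lt c ℓ σ k0 t j h
    by_cases hA : 0 ≤ GKA c ℓ j (zfun c ℓ σ k0 t)
    · right
      rw [hz, min_eq_right hA]
      norm_num
      exact hA
    · left
      push_neg at hA
      rw [hz, min_eq_left (le_of_lt hA)]
      constructor <;> linarith

lemma zf_notMem (hσ : σ k0 = true) (hM : GKm c ℓ σ k0 < 0) :
    zfun c ℓ σ k0 0 ∉ GKcube c ℓ := by
  intro hmem
  have hz : zfun c ℓ σ k0 0 k0 = ((GKm c ℓ σ k0 : ℤ) : ℝ) := by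
    rw [zf_eq c ℓ σ k0 0]; ring
  have hA := zf_A_k0 c ℓ σ k0 0 hσ
  have hMR : ((GKm c ℓ σ k0 : ℤ) : ℝ) < 0 := by exact_mod_cast hM
  rcases hmem k0 with ⟨h1, h2⟩ | ⟨h1, h2⟩
  · rw [hz, hA] at h1; exact absurd h1 (lt_irrefl _)
  · rw [hz] at h1; linarith

lemma zf_cont : ∀ (d : ℕ) (j : Fin n), n - j.val ≤ d →
    Continuous (fun t => zfun c ℓ σ k0 t j) := by
  intro d
  induction d with
  | zero => intro j hj; have := j.isLt; omega
  | succ d ih =>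
    intro j hj
    rcases lt_trichotomy k0 j with h | h | h
    · have e : (fun t => zfun c ℓ σ k0 t j) = fun _ => ((GKm c ℓ σ j : ℤ) : ℝ) :=
        funext fun t => zf_gt c ℓ σ k0 t j h
      rw [e]; exact continuous_const
    · subst h
      have e : (fun t => zfun c ℓ σ k0 t k0)
          = fun t => ((GKm c ℓ σ k0 : ℤ) : ℝ) * (2 - t) / 2 := by
        funext t; exact zf_eq c ℓ σ k0 t
      rw [e]
      exact (continuous_const.mul (continuous_const.sub continuous_id)).div_const 2
    · have e : (fun t => zfun c ℓ σ k0 t j)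
          = fun t => min ((ℓ j : ℝ) - ∑ s ∈ (Finset.univ.filter fun s : Fin n => j < s).attach,
              (c j s.1 : ℝ) * zfun c ℓ σ k0 t s.1) 0 / 2 := by
        funext t
        conv_lhs => rw [zfun]
        rw [if_neg (by exact fun hc => absurd (lt_trans h hc) (lt_irrefl j)),
          if_neg (ne_of_lt h)]
      rw [e]
      apply Continuous.div_const
      apply Continuous.min _ continuous_const
      apply Continuous.sub continuous_const
      apply continuous_finset_sum
      intro s _
      apply Continuous.mul continuous_const
      have hs := s.2
      simp only [Finset.mem_filter, Finset.mem_univ, true_and, Fin.lt_def] at hs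
      exact ih s.1 (by omega)

lemma not_closed_of_bad (hσ : σ k0 = true) (hM : GKm c ℓ σ k0 < 0)
    (H' : ∀ (τ : Fin n → Bool) (s : Fin n), k0 < s → 0 ≤ GKm c ℓ τ s) :
    ¬ IsClosed (GKcube c ℓ) := by
  intro hcl
  have hcont : Continuous (fun t => zfun c ℓ σ k0 t) := by
    apply continuous_pi
    intro j
    exact zf_cont c ℓ σ k0 (n - j.val) j le_rfl
  have htend : Filter.Tendsto (fun t => zfun c ℓ σ k0 t) (nhdsWithin 0 (Set.Ioi 0))
      (nhds (zfun c ℓ σ k0 0)) :=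
    (hcont.tendsto 0).mono_left nhdsWithin_le_nhds
  have hev : ∀ᶠ t in nhdsWithin (0:ℝ) (Set.Ioi 0), zfun c ℓ σ k0 t ∈ GKcube c ℓ := by
    filter_upwards [Ioo_mem_nhdsGT_of_mem (Set.mem_Ico.2 ⟨le_refl (0:ℝ), zero_lt_one⟩)]
    intro t ht
    exact zf_mem c ℓ σ k0 t ht.1 (le_of_lt ht.2) hσ hM H'
  have hclos : zfun c ℓ σ k0 0 ∈ closure (GKcube c ℓ) :=
    mem_closure_of_tendsto htend hev
  rw [hcl.closure_eq] at hclos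
  exact zf_notMem c ℓ σ k0 hσ hM hclos

end GKaux

/-- Theorem, Harada–Yang.  For a positive integer `n` and
integers `c = (c_{jk})`, `ℓ = (ℓ_1,…,ℓ_n)`, the Grossberg–Karshon twisted cube
`(C(c,ℓ), ρ)` is untwisted if and only if `m_{σ,k} ≥ 0` for every
`σ ∈ {+,−}^n` and every `1 ≤ k ≤ n`. -/
theorem statement0 {n : ℕ} (hn : 0 < n) (c : Fin n → Fin n → ℤ) (ℓ : Fin n → ℤ) :
    GKUntwisted c ℓ ↔ ∀ (σ : Fin n → Bool) (k : Fin n), 0 ≤ GKm c ℓ σ k := by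
  classical
  constructor
  · intro hU
    by_contra hbad
    push_neg at hbad
    obtain ⟨σ1, k1, hk1⟩ := hbad
    set T : Finset (Fin n) := Finset.univ.filter (fun k : Fin n => ∃ σ, GKm c ℓ σ k < 0)
      with hT
    have hTne : T.Nonempty := ⟨k1, by simp [hT]; exact ⟨σ1, hk1⟩⟩
    set k0 : Fin n := T.max' hTne with hk0
    have hk0T : k0 ∈ T := T.max'_mem hTne
    obtain ⟨σ, hσM⟩ : ∃ σ, GKm c ℓ σ k0 < 0 := by
      have := hk0T
      simp [hT] at this
      exact this
    have H' : ∀ (τ : Fin n → Bool) (s : Fin n), k0 < s → 0 ≤ GKm c ℓ τ s := by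
      intro τ s hs
      by_contra h
      push_neg at h
      have hsT : s ∈ T := by simp [hT]; exact ⟨τ, h⟩
      exact absurd (lt_of_lt_of_le hs (T.le_max' s hsT)) (lt_irrefl _)
    have hσk0 : σ k0 = true := by
      by_contra h
      rw [GKm_false c ℓ σ k0 (by simpa using h)] at hσM
      exact absurd hσM (lt_irrefl 0)
    exact absurd hU.1 (not_closed_of_bad c ℓ σ k0 hσk0 hσM H')
  · exact backward c ℓ
end

section
/- Let c_{ij} (1 ≤ i < j ≤ n) and ℓ_1,…,ℓ_n be fixed integers with ℓ_i ≥ 0 for all i. If there exist an element σ of {+,−}^n and k ∈ {1,…,n} such that m_{σ,k} > 0 and m_{σ,i} ≥ 0 for all i > k, then there exists an increasing sequence of indices 1 ≤ j_1 < j_2 < ⋯ < j_s ≤ n with s ≥ 1 such that: (1) j_1 = k; (2) ℓ_{j_s} > 0; and (3) c_{j_t j_{t+1}} < 0 for all t = 1,…,s−1. -/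
open Finset

theorem aux1 {n : ℕ} (c : Fin n → Fin n → ℤ) (ℓ : Fin n → ℤ)
    (hℓ : ∀ i, 0 ≤ ℓ i) (σ : Fin n → Bool) (k : Fin n)
    (hk : 0 < GKm c ℓ σ k) (hge : ∀ i : Fin n, k < i → 0 ≤ GKm c ℓ σ i) :
    ∃ (s : ℕ) (j : Fin (s + 1) → Fin n), StrictMono j ∧ j 0 = k ∧
      0 < ℓ (j (Fin.last s)) ∧
      ∀ t : Fin s, c (j t.castSucc) (j t.succ) < 0 := by
  by_cases hl : 0 < ℓ k
  · refine ⟨0, fun _ => k, ?_, rfl, hl, fun t => t.elim0⟩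
    intro a b hab
    have ha := a.isLt; have hb := b.isLt
    rw [Fin.lt_def] at hab; omega
  · push_neg at hl
    have hσ : σ k = true := by
      by_contra h
      rw [GKm] at hk
      simp [h] at hk
    rw [GKm, hσ, if_pos rfl] at hk
    have hsum : ∑ s ∈ (Finset.univ.filter fun s : Fin n => k < s).attach,
        c k s.1 * GKm c ℓ σ s.1 < 0 := by omega
    have : ∃ s ∈ (Finset.univ.filter fun s : Fin n => k < s).attach,
        c k s.1 * GKm c ℓ σ s.1 < 0 := by
      by_contra h
      push_neg at h
      exact absurd (Finset.sum_nonneg h) (not_le.mpr hsum)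
    obtain ⟨⟨s₀, hs₀mem⟩, _, hneg⟩ := this
    simp only [Finset.mem_filter, Finset.mem_univ, true_and] at hs₀mem
    have hms₀ : 0 ≤ GKm c ℓ σ s₀ := hge s₀ hs₀mem
    have hcneg : c k s₀ < 0 := by
      by_contra h
      push_neg at h
      exact absurd (mul_nonneg h hms₀) (not_le.mpr hneg)
    have hm₀pos : 0 < GKm c ℓ σ s₀ := by
      rcases hms₀.lt_or_eq with h | h
      · exact h
      · simp [← h] at hneg
    obtain ⟨s', j', hmono, hj0, hlast, hstep⟩ :=
      aux1 c ℓ hℓ σ s₀ hm₀pos (fun i hi => hge i (hs₀mem.trans hi))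
    refine ⟨s' + 1, Fin.cons k j', ?_, rfl, ?_, ?_⟩
    · rw [Fin.strictMono_iff_lt_succ]
      intro i
      refine Fin.cases ?_ (fun i' => ?_) i
      · simp only [Fin.castSucc_zero, Fin.cons_zero, Fin.cons_succ, hj0]
        exact hs₀mem
      · rw [← Fin.succ_castSucc]
        simp only [Fin.cons_succ]
        exact hmono (Fin.castSucc_lt_succ (i := i'))
    · rw [show Fin.last (s' + 1) = (Fin.last s').succ from rfl, Fin.cons_succ]
      exact hlast
    · intro t
      refine Fin.cases ?_ (fun t' => ?_) t
      · simp only [Fin.castSucc_zero, Fin.cons_zero, Fin.cons_succ, hj0]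
        exact hcneg
      · rw [← Fin.succ_castSucc]
        simp only [Fin.cons_succ]
        exact hstep t'
termination_by n - k.val
decreasing_by
  have h := hs₀mem
  simp only [Finset.mem_filter, Finset.mem_univ, true_and, Fin.lt_def] at h
  omega

/-- If `ℓ_i ≥ 0` for all `i`, and there are `σ ∈ {+,−}^n` and
`k` with `m_{σ,k} > 0` and `m_{σ,i} ≥ 0` for all `i > k`, then there is an
increasing sequence of indices `j_1 < ⋯ < j_s` (`s ≥ 1`, here encoded by a
strictly monotone `j : Fin (s+1) → Fin n`, so of length `s + 1 ≥ 1`) with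
`j_1 = k`, `ℓ_{j_s} > 0`, and `c_{j_t j_{t+1}} < 0` for all intermediate `t`. -/
theorem statement1 {n : ℕ} (c : Fin n → Fin n → ℤ) (ℓ : Fin n → ℤ)
    (hℓ : ∀ i, 0 ≤ ℓ i) (σ : Fin n → Bool) (k : Fin n)
    (hk : 0 < GKm c ℓ σ k) (hge : ∀ i : Fin n, k < i → 0 ≤ GKm c ℓ σ i) :
    ∃ (s : ℕ) (j : Fin (s + 1) → Fin n), StrictMono j ∧ j 0 = k ∧
      0 < ℓ (j (Fin.last s)) ∧
      ∀ t : Fin s, c (j t.castSucc) (j t.succ) < 0 :=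
  aux1 c ℓ hℓ σ k hk hge
end

section
/- Let c_{ij} (1 ≤ i < j ≤ n) and ℓ_1,…,ℓ_n be fixed integers with ℓ_i ≥ 0 for all i, and let (C(c,ℓ), ρ) be the corresponding Grossberg–Karshon twisted cube. If (C(c,ℓ), ρ) is twisted, then there exists an increasing sequence of indices 1 ≤ j_0 < j_1 < ⋯ < j_s ≤ n with s ≥ 1 such that: (1) ℓ_{j_s} > 0; (2) c_{j_0 j_1} > 0; and (3) c_{j_t j_{t+1}} < 0 for all t = 1,…,s−1. -/
open Finset

/-- The walk, exactly matching the goal statement. -/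
def GKWalk {n : ℕ} (c : Fin n → Fin n → ℤ) (ℓ : Fin n → ℤ) : Prop :=
  ∃ (s : ℕ) (_ : 1 ≤ s) (j : Fin (s + 1) → Fin n), StrictMono j ∧
      0 < ℓ (j (Fin.last s)) ∧
      0 < c (j 0) (j ⟨1, Nat.succ_le_succ ‹1 ≤ s›⟩) ∧
      ∀ t : Fin s, 1 ≤ t.val → c (j t.castSucc) (j t.succ) < 0

/-- An increasing chain with negative `c`-edges ending with `ℓ > 0`, in ℕ encoding. -/
def GKChain {n : ℕ} (c : Fin n → Fin n → ℤ) (ℓ : Fin n → ℤ) (k : Fin n) : Prop :=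
  ∃ (s : ℕ) (j : ℕ → Fin n), j 0 = k ∧
    (∀ t < s, j t < j (t + 1) ∧ c (j t) (j (t + 1)) < 0) ∧ 0 < ℓ (j s)

lemma GKWalk_mk {n : ℕ} {c : Fin n → Fin n → ℤ} {ℓ : Fin n → ℤ}
    (s : ℕ) (hs : 1 ≤ s) (j : ℕ → Fin n)
    (hmono : ∀ t < s, j t < j (t + 1)) (hl : 0 < ℓ (j s))
    (hc0 : 0 < c (j 0) (j 1))
    (hcneg : ∀ t, 1 ≤ t → t < s → c (j t) (j (t + 1)) < 0) :
    GKWalk c ℓ := by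
  refine ⟨s, hs, fun i => j i.val, ?_, ?_, ?_, ?_⟩
  · rw [Fin.strictMono_iff_lt_succ]
    intro i
    simpa using hmono i.val i.isLt
  · simpa using hl
  · simpa using hc0
  · intro t ht
    simpa using hcneg t.val ht t.isLt

lemma GKChain_prepend {n : ℕ} {c : Fin n → Fin n → ℤ} {ℓ : Fin n → ℤ}
    {k s : Fin n} (hks : k < s) (hc : c k s < 0) (hch : GKChain c ℓ s) :
    GKChain c ℓ k := by
  obtain ⟨m, j, hj0, hstep, hl⟩ := hch
  refine ⟨m + 1, fun t => if t = 0 then k else j (t - 1), by simp, ?_, ?_⟩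
  · intro t ht
    rcases Nat.eq_zero_or_pos t with rfl | htpos
    · simpa [hj0] using ⟨hks, hc⟩
    · have h1 : t ≠ 0 := htpos.ne'
      have h2 : t + 1 ≠ 0 := by omega
      have h3 : t - 1 < m := by omega
      have := hstep (t - 1) h3
      have e1 : t - 1 + 1 = t + 1 - 1 := by omega
      simp only [if_neg h1, if_neg h2]
      rw [← e1]
      exact this
  · have h2 : m + 1 ≠ 0 := by omega
    simp only [if_neg h2]
    simpa using hl

lemma GKWalk_of_chain {n : ℕ} {c : Fin n → Fin n → ℤ} {ℓ : Fin n → ℤ}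
    {k s : Fin n} (hks : k < s) (hc : 0 < c k s) (hch : GKChain c ℓ s) :
    GKWalk c ℓ := by
  obtain ⟨m, j, hj0, hstep, hl⟩ := hch
  refine GKWalk_mk (m + 1) (by omega) (fun t => if t = 0 then k else j (t - 1)) ?_ ?_ ?_ ?_
  · intro t ht
    rcases Nat.eq_zero_or_pos t with rfl | htpos
    · simpa [hj0] using hks
    · have h1 : t ≠ 0 := htpos.ne'
      have h2 : t + 1 ≠ 0 := by omega
      have h3 : t - 1 < m := by omega
      have := (hstep (t - 1) h3).1
      have e1 : t - 1 + 1 = t + 1 - 1 := by omega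
      simp only [if_neg h1, if_neg h2]
      rw [← e1]
      exact this
  · have h2 : m + 1 ≠ 0 := by omega
    simp only [if_neg h2]
    simpa using hl
  · simpa [hj0] using hc
  · intro t ht1 htm
    have h1 : t ≠ 0 := by omega
    have h2 : t + 1 ≠ 0 := by omega
    have h3 : t - 1 < m := by omega
    have := (hstep (t - 1) h3).2
    have e1 : t - 1 + 1 = t + 1 - 1 := by omega
    simp only [if_neg h1, if_neg h2]
    rw [← e1]
    exact this

lemma GKA_congr {n : ℕ} (c : Fin n → Fin n → ℤ) (ℓ : Fin n → ℤ) (j : Fin n)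
    {x y : Fin n → ℝ} (h : ∀ s : Fin n, j < s → x s = y s) :
    GKA c ℓ j x = GKA c ℓ j y := by
  unfold GKA
  congr 1
  refine Finset.sum_congr rfl fun s hs => ?_
  rw [h s (by simpa using hs)]

lemma GKA_combo {n : ℕ} (c : Fin n → Fin n → ℤ) (ℓ : Fin n → ℤ) (j : Fin n)
    {ι : Type*} (S : Finset ι) (w : ι → ℝ) (g : ι → (Fin n → ℝ))
    (hw : ∑ v ∈ S, w v = 1) :
    GKA c ℓ j (∑ v ∈ S, w v • g v) = ∑ v ∈ S, w v * GKA c ℓ j (g v) := by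
  unfold GKA
  have h1 : ∀ k : Fin n, (∑ v ∈ S, w v • g v) k = ∑ v ∈ S, w v * g v k := fun k => by simp
  simp only [h1, mul_sub, Finset.sum_sub_distrib, ← Finset.sum_mul, hw, one_mul,
    Finset.mul_sum]
  congr 1
  rw [Finset.sum_comm]
  exact Finset.sum_congr rfl fun v _ => Finset.sum_congr rfl fun k _ => by ring

lemma GKA_combo2 {n : ℕ} (c : Fin n → Fin n → ℤ) (ℓ : Fin n → ℤ) (j : Fin n)
    (x y : Fin n → ℝ) (a b : ℝ) (hab : a + b = 1) :
    GKA c ℓ j (a • x + b • y) = a * GKA c ℓ j x + b * GKA c ℓ j y := by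
  unfold GKA
  have e1 : ∑ k ∈ Finset.univ.filter (fun k : Fin n => j < k), (c j k : ℝ) * (a • x + b • y) k
      = a * ∑ k ∈ Finset.univ.filter (fun k : Fin n => j < k), (c j k : ℝ) * x k
        + b * ∑ k ∈ Finset.univ.filter (fun k : Fin n => j < k), (c j k : ℝ) * y k := by
    rw [Finset.mul_sum, Finset.mul_sum, ← Finset.sum_add_distrib]
    exact Finset.sum_congr rfl fun k _ => by simp [smul_eq_mul]; ring
  rw [e1]
  linear_combination (-(↑(ℓ j) : ℝ)) * hab

def GKQ {n : ℕ} (c : Fin n → Fin n → ℤ) (ℓ : Fin n → ℤ) (m : ℕ) : Set (Fin n → ℝ) :=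
  {x | (∀ j : Fin n, j.val < m → x j = 0) ∧
    ∀ j : Fin n, m ≤ j.val → 0 ≤ x j ∧ x j ≤ GKA c ℓ j x}

lemma GKQ_convex {n : ℕ} (c : Fin n → Fin n → ℤ) (ℓ : Fin n → ℤ) (m : ℕ) :
    Convex ℝ (GKQ c ℓ m) := by
  intro x hx y hy a b ha hb hab
  constructor
  · intro j hj
    simp [Pi.add_apply, Pi.smul_apply, smul_eq_mul, hx.1 j hj, hy.1 j hj]
  · intro j hj
    have h1 := hx.2 j hj
    have h2 := hy.2 j hj
    constructor
    · have : (a • x + b • y) j = a * x j + b * y j := by simp [smul_eq_mul]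
      rw [this]
      have := mul_nonneg ha h1.1
      have := mul_nonneg hb h2.1
      linarith
    · have e : (a • x + b • y) j = a * x j + b * y j := by simp [smul_eq_mul]
      rw [e, GKA_combo2 c ℓ j x y a b hab]
      have := h1.2; have := h2.2
      nlinarith [h1.2, h2.2]

lemma GKQ_zero_closed {n : ℕ} (c : Fin n → Fin n → ℤ) (ℓ : Fin n → ℤ) :
    IsClosed (GKQ c ℓ 0) := by
  have he : GKQ c ℓ 0 = ⋂ j : Fin n,
      ({x : Fin n → ℝ | 0 ≤ x j} ∩ {x | x j ≤ GKA c ℓ j x}) := by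
    ext x
    simp [GKQ, Set.mem_iInter, forall_and]
  rw [he]
  refine isClosed_iInter fun j => IsClosed.inter ?_ ?_
  · exact isClosed_le continuous_const (continuous_apply j)
  · refine isClosed_le (continuous_apply j) ?_
    unfold GKA
    exact continuous_const.sub (continuous_finset_sum _ fun k _ =>
      continuous_const.mul (continuous_apply k))

/-- MAIN: under no-walk, weak cube conditions force nonnegativity of all `x_k` and `A_k x`. -/
lemma GK_main {n : ℕ} {c : Fin n → Fin n → ℤ} {ℓ : Fin n → ℤ}
    (hℓ : ∀ i, 0 ≤ ℓ i) (hnw : ¬ GKWalk c ℓ) (x : Fin n → ℝ)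
    (hx : ∀ j : Fin n, (GKA c ℓ j x < x j ∧ x j < 0) ∨
      (0 ≤ x j ∧ (0 < x j → x j ≤ GKA c ℓ j x))) :
    ∀ k : Fin n, 0 ≤ x k ∧ 0 ≤ GKA c ℓ k x ∧ (0 < x k → GKChain c ℓ k) := by
  have H : ∀ d : ℕ, ∀ k : Fin n, n - k.val ≤ d →
      0 ≤ x k ∧ 0 ≤ GKA c ℓ k x ∧ (0 < x k → GKChain c ℓ k) := by
    intro d
    induction d with
    | zero => intro k hk; exact absurd hk (by have := k.isLt; omega)
    | succ d ih =>
      intro k hk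
      have IH : ∀ s : Fin n, k < s →
          0 ≤ x s ∧ 0 ≤ GKA c ℓ s x ∧ (0 < x s → GKChain c ℓ s) := by
        intro s hs
        exact ih s (by have := s.isLt; have : k.val < s.val := hs; omega)
      -- key step: A_k < 0 leads to a walk
      have hA : 0 ≤ GKA c ℓ k x := by
        by_contra hA
        push_neg at hA
        have hsum : (ℓ k : ℝ) < ∑ s ∈ Finset.univ.filter (fun s : Fin n => k < s),
            (c k s : ℝ) * x s := by
          unfold GKA at hA; linarith
        have hpos : ∃ s ∈ Finset.univ.filter (fun s : Fin n => k < s),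
            0 < (c k s : ℝ) * x s := by
          by_contra hc
          push_neg at hc
          have : ∑ s ∈ Finset.univ.filter (fun s : Fin n => k < s),
              (c k s : ℝ) * x s ≤ 0 := Finset.sum_nonpos hc
          have : (0:ℝ) ≤ ℓ k := by exact_mod_cast hℓ k
          linarith
        obtain ⟨s, hsmem, hcs⟩ := hpos
        have hks : k < s := by simpa using hsmem
        have hxs0 : 0 ≤ x s := (IH s hks).1
        have hxs : 0 < x s := by
          rcases lt_or_eq_of_le hxs0 with h | h
          · exact h
          · exfalso; rw [← h] at hcs; simp at hcs
        have hcpos : 0 < c k s := by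
          by_contra hcn
          push_neg at hcn
          have : (c k s : ℝ) ≤ 0 := by exact_mod_cast hcn
          nlinarith
        exact hnw (GKWalk_of_chain hks hcpos ((IH s hks).2.2 hxs))
      have hxk : 0 ≤ x k := by
        rcases hx k with ⟨h1, h2⟩ | ⟨h1, _⟩
        · linarith
        · exact h1
      refine ⟨hxk, hA, ?_⟩
      intro hxkpos
      have hxA : x k ≤ GKA c ℓ k x := by
        rcases hx k with ⟨_, h2⟩ | ⟨_, h2⟩
        · linarith
        · exact h2 hxkpos
      rcases lt_or_ge 0 (ℓ k) with hl | hl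
      · exact ⟨0, fun _ => k, rfl, by omega, by simpa using hl⟩
      · have hlk : ℓ k = 0 := le_antisymm hl (hℓ k)
        have hsum : ∑ s ∈ Finset.univ.filter (fun s : Fin n => k < s),
            (c k s : ℝ) * x s < 0 := by
          have : 0 < GKA c ℓ k x := lt_of_lt_of_le hxkpos hxA
          unfold GKA at this
          rw [hlk] at this
          push_cast at this
          linarith
        have hneg : ∃ s ∈ Finset.univ.filter (fun s : Fin n => k < s),
            (c k s : ℝ) * x s < 0 := by
          by_contra hc
          push_neg at hc
          have : 0 ≤ ∑ s ∈ Finset.univ.filter (fun s : Fin n => k < s),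
              (c k s : ℝ) * x s := Finset.sum_nonneg hc
          linarith
        obtain ⟨s, hsmem, hcs⟩ := hneg
        have hks : k < s := by simpa using hsmem
        have hxs0 : 0 ≤ x s := (IH s hks).1
        have hxs : 0 < x s := by
          rcases lt_or_eq_of_le hxs0 with h | h
          · exact h
          · exfalso; rw [← h] at hcs; simp at hcs
        have hcneg : c k s < 0 := by
          by_contra hcn
          push_neg at hcn
          have : (0:ℝ) ≤ (c k s : ℝ) := by exact_mod_cast hcn
          nlinarith
        exact GKChain_prepend hks hcneg ((IH s hks).2.2 hxs)
  intro k
  exact H n k (by omega)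

/-- Membership in `GKQ` gives the weak hypotheses of `GK_main`. -/
lemma GKQ_hx {n : ℕ} {c : Fin n → Fin n → ℤ} {ℓ : Fin n → ℤ} {m : ℕ}
    {x : Fin n → ℝ} (hx : x ∈ GKQ c ℓ m) :
    ∀ j : Fin n, (GKA c ℓ j x < x j ∧ x j < 0) ∨
      (0 ≤ x j ∧ (0 < x j → x j ≤ GKA c ℓ j x)) := by
  intro j
  rcases lt_or_ge j.val m with hj | hj
  · right
    rw [hx.1 j hj]
    exact ⟨le_refl 0, fun h => absurd h (lt_irrefl 0)⟩
  · right
    exact ⟨(hx.2 j hj).1, fun _ => (hx.2 j hj).2⟩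

lemma GKQ_hull {n : ℕ} {c : Fin n → Fin n → ℤ} {ℓ : Fin n → ℤ}
    (hℓ : ∀ i, 0 ≤ ℓ i) (hnw : ¬ GKWalk c ℓ) :
    ∀ (d m : ℕ), n ≤ m + d →
      ∃ S : Finset (Fin n → ℝ), GKQ c ℓ m = convexHull ℝ (S : Set (Fin n → ℝ)) := by
  intro d
  induction d with
  | zero =>
    intro m hm
    refine ⟨{0}, ?_⟩
    rw [Finset.coe_singleton, convexHull_singleton]
    ext x
    simp only [GKQ, Set.mem_setOf_eq, Set.mem_singleton_iff]
    constructor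
    · rintro ⟨h1, _⟩
      funext j
      exact h1 j (by have := j.isLt; omega)
    · rintro rfl
      exact ⟨fun j _ => rfl, fun j hj => absurd hj (by have := j.isLt; omega)⟩
  | succ d ih =>
    intro m hm
    rcases le_or_gt n (m + d) with h | h
    · exact ih m h
    have hmn : m < n := by omega
    obtain ⟨S, hS⟩ := ih (m + 1) (by omega)
    set km : Fin n := ⟨m, hmn⟩ with hkm
    have hkmv : km.val = m := rfl
    classical
    set S' : Finset (Fin n → ℝ) :=
      S ∪ S.image (fun v => Function.update v km (GKA c ℓ km v)) with hS'
    refine ⟨S', ?_⟩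
    have hSsub : ∀ v ∈ S, v ∈ GKQ c ℓ (m + 1) := by
      intro v hv
      rw [hS]
      exact subset_convexHull ℝ _ (by exact_mod_cast hv)
    have hS'sub : (S' : Set (Fin n → ℝ)) ⊆ GKQ c ℓ m := by
      intro u hu
      simp only [hS', Finset.coe_union, Set.mem_union, Finset.coe_image,
        Set.mem_image, Finset.mem_coe] at hu
      rcases hu with hu | ⟨v, hv, rfl⟩
      · have hq := hSsub u hu
        have hmain := GK_main hℓ hnw u (GKQ_hx hq)
        constructor
        · intro j hj; exact hq.1 j (by omega)
        · intro j hj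
          rcases eq_or_lt_of_le hj with hjm | hjm
          · have h0 : u j = 0 := hq.1 j (by omega)
            rw [h0]
            exact ⟨le_refl 0, (hmain j).2.1⟩
          · exact hq.2 j (by omega)
      · have hq := hSsub v hv
        have hmain := GK_main hℓ hnw v (GKQ_hx hq)
        have hAv : 0 ≤ GKA c ℓ km v := (hmain km).2.1
        have hagree : ∀ s : Fin n, km < s →
            Function.update v km (GKA c ℓ km v) s = v s := by
          intro s hs
          exact Function.update_of_ne hs.ne' _ _
        constructor
        · intro j hj
          have hne : j ≠ km := Fin.ne_of_val_ne (by rw [hkmv]; omega)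
          rw [Function.update_of_ne hne]
          exact hq.1 j (by omega)
        · intro j hj
          rcases eq_or_lt_of_le hj with hjm | hjm
          · have hjk : j = km := Fin.ext (by rw [hkmv]; omega)
            rw [hjk, Function.update_self]
            refine ⟨hAv, ?_⟩
            rw [GKA_congr c ℓ km hagree]
          · have hne : j ≠ km := Fin.ne_of_val_ne (by rw [hkmv]; omega)
            rw [Function.update_of_ne hne]
            have h2 := hq.2 j (by omega)
            refine ⟨h2.1, ?_⟩
            have he : GKA c ℓ j (Function.update v km (GKA c ℓ km v)) = GKA c ℓ j v := by
              apply GKA_congr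
              intro s hs
              refine Function.update_of_ne ?_ _ _
              have := Fin.lt_def.mp hs
              exact Fin.ne_of_val_ne (by rw [hkmv]; omega)
            rw [he]
            exact h2.2
    apply Set.Subset.antisymm
    · intro x hx
      set y : Fin n → ℝ := Function.update x km 0 with hy
      have hyQ : y ∈ GKQ c ℓ (m + 1) := by
        constructor
        · intro j hj
          rcases eq_or_ne j km with rfl | hne
          · rw [hy]; exact Function.update_self _ _ _
          · rw [hy, Function.update_of_ne hne]
            refine hx.1 j ?_
            have : j.val ≠ m := fun hh => hne (Fin.ext (by rw [hkmv]; omega))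
            omega
        · intro j hj
          have hne : j ≠ km := Fin.ne_of_val_ne (by rw [hkmv]; omega)
          rw [hy, Function.update_of_ne hne]
          have h2 := hx.2 j (by omega)
          refine ⟨h2.1, ?_⟩
          have he : GKA c ℓ j y = GKA c ℓ j x := by
            apply GKA_congr
            intro s hs
            rw [hy]
            refine Function.update_of_ne ?_ _ _
            have := Fin.lt_def.mp hs
            exact Fin.ne_of_val_ne (by rw [hkmv]; omega)
          rw [he]
          exact h2.2
      have hyhull : y ∈ convexHull ℝ (S : Set (Fin n → ℝ)) := by rw [← hS]; exact hyQ
      have hyhull2 := hyhull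
      rw [Finset.convexHull_eq] at hyhull2
      obtain ⟨w, hw0, hw1, hwy⟩ := hyhull2
      rw [Finset.centerMass_eq_of_sum_1 _ id hw1] at hwy
      simp only [id] at hwy
      have hxkm := hx.2 km (le_of_eq hkmv.symm)
      set t : ℝ := x km with ht
      have hAxy : GKA c ℓ km x = GKA c ℓ km y := by
        apply GKA_congr
        intro s hs
        rw [hy]
        exact (Function.update_of_ne hs.ne' _ _).symm
      have htle : t ≤ GKA c ℓ km y := by rw [← hAxy]; exact hxkm.2
      have ht0 : 0 ≤ t := hxkm.1
      have hShull : (S : Set (Fin n → ℝ)) ⊆ (S' : Set (Fin n → ℝ)) := by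
        intro v hv
        simp only [hS', Finset.coe_union, Set.mem_union]
        left; exact hv
      have hyS' : y ∈ convexHull ℝ (S' : Set (Fin n → ℝ)) := convexHull_mono hShull hyhull
      set z : Fin n → ℝ := ∑ v ∈ S, w v • Function.update v km (GKA c ℓ km v) with hz
      have hzS' : z ∈ convexHull ℝ (S' : Set (Fin n → ℝ)) := by
        rw [hz, ← Finset.centerMass_eq_of_sum_1 _ _ hw1]
        refine Finset.centerMass_mem_convexHull _ hw0 (by rw [hw1]; norm_num) ?_
        intro v hv
        simp only [hS', Finset.coe_union, Set.mem_union, Finset.coe_image, Set.mem_image,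
          Finset.mem_coe]
        right
        exact ⟨v, hv, rfl⟩
      have hzco : ∀ j : Fin n, j ≠ km → z j = y j := by
        intro j hne
        rw [hz, Finset.sum_apply, ← hwy, Finset.sum_apply]
        refine Finset.sum_congr rfl fun v hv => ?_
        simp only [Pi.smul_apply, smul_eq_mul]
        rw [Function.update_of_ne hne]
      have hzkm : z km = GKA c ℓ km y := by
        have e1 : y = ∑ v ∈ S, w v • (fun v : Fin n → ℝ => v) v := hwy.symm
        rw [hz, Finset.sum_apply, e1, GKA_combo c ℓ km S w _ hw1]
        refine Finset.sum_congr rfl fun v hv => ?_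
        simp only [Pi.smul_apply, smul_eq_mul]
        rw [Function.update_self]
      rcases eq_or_lt_of_le (le_trans ht0 htle) with hA0 | hApos
      · have ht00 : t = 0 := le_antisymm (by rw [← hA0] at htle; exact htle) ht0
        have hxy : x = y := by
          funext j
          rcases eq_or_ne j km with rfl | hne
          · rw [hy, Function.update_self, ← ht, ht00]
          · rw [hy, Function.update_of_ne hne]
        rw [hxy]; exact hyS'
      · set β : ℝ := t / GKA c ℓ km y with hβ
        have hβ0 : 0 ≤ β := div_nonneg ht0 (le_of_lt hApos)
        have hβ1 : β ≤ 1 := by rw [hβ, div_le_one hApos]; exact htle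
        have hxco : x = (1 - β) • y + β • z := by
          funext j
          simp only [Pi.add_apply, Pi.smul_apply, smul_eq_mul]
          rcases eq_or_ne j km with rfl | hne
          · have hykm : y km = 0 := by rw [hy]; exact Function.update_self _ _ _
            rw [hykm, hzkm, hβ, mul_zero, zero_add,
              div_mul_cancel₀ _ (ne_of_gt hApos)]
          · have hyj : y j = x j := by rw [hy]; exact Function.update_of_ne hne _ _
            rw [hzco j hne, hyj]; ring
        rw [hxco]
        exact (convex_convexHull ℝ _) hyS' hzS' (by linarith) hβ0 (by ring)
    · exact convexHull_min hS'sub (GKQ_convex c ℓ m)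

/-- If `ℓ_i ≥ 0` for all `i` and `(C(c,ℓ), ρ)` is twisted,
then there is an increasing sequence of indices `j_0 < j_1 < ⋯ < j_s` with
`s ≥ 1` such that `ℓ_{j_s} > 0`, `c_{j_0 j_1} > 0`, and `c_{j_t j_{t+1}} < 0`
for all `t = 1, …, s−1`. -/
theorem statement2 {n : ℕ} (c : Fin n → Fin n → ℤ) (ℓ : Fin n → ℤ)
    (hℓ : ∀ i, 0 ≤ ℓ i) (htw : ¬ GKUntwisted c ℓ) :
    ∃ (s : ℕ) (hs : 1 ≤ s) (j : Fin (s + 1) → Fin n), StrictMono j ∧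
      0 < ℓ (j (Fin.last s)) ∧
      0 < c (j 0) (j ⟨1, by omega⟩) ∧
      ∀ t : Fin s, 1 ≤ t.val → c (j t.castSucc) (j t.succ) < 0 := by
  classical
  by_contra hnw
  have hnw' : ¬ GKWalk c ℓ := hnw
  have hQ : GKcube c ℓ = GKQ c ℓ 0 := by
    apply Set.Subset.antisymm
    · intro x hx
      have hx' : ∀ j : Fin n, (GKA c ℓ j x < x j ∧ x j < 0) ∨
          (0 ≤ x j ∧ (0 < x j → x j ≤ GKA c ℓ j x)) := by
        intro j
        rcases hx j with h | h
        · exact Or.inl h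
        · exact Or.inr ⟨h.1, fun _ => h.2⟩
      have hmain := GK_main hℓ hnw' x hx'
      refine ⟨fun j hj => absurd hj (by omega), fun j _ => ?_⟩
      refine ⟨(hmain j).1, ?_⟩
      rcases hx j with h | h
      · exact absurd (hmain j).1 (not_le.mpr h.2)
      · exact h.2
    · intro x hx
      intro j
      exact Or.inr (hx.2 j (Nat.zero_le _))
  have hnonneg : ∀ x ∈ GKcube c ℓ, ∀ j : Fin n, 0 ≤ x j := by
    intro x hx j
    rw [hQ] at hx
    exact (hx.2 j (Nat.zero_le _)).1
  refine htw ⟨?_, ?_, ?_, ?_⟩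
  · rw [hQ]; exact GKQ_zero_closed c ℓ
  · rw [hQ]; exact GKQ_convex c ℓ 0
  · rw [hQ]; exact GKQ_hull hℓ hnw' n 0 (by omega)
  · intro x hx
    have hprod : ∏ k : Fin n, GKsgn (x k) = (-1 : ℝ) ^ n := by
      have h1 : ∀ k : Fin n, GKsgn (x k) = -1 := by
        intro k
        unfold GKsgn
        rw [if_neg (not_lt.mpr (hnonneg x hx k))]
      rw [Finset.prod_congr rfl (fun k _ => h1 k), Finset.prod_const]
      simp [Finset.card_univ]
    unfold GKrho
    rw [if_pos hx, hprod, ← mul_pow]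
    norm_num
end

section
/- Let A be the Cartan matrix of a complex semisimple Lie algebra of rank r, let I = (i_1,…,i_n) be a word with entries in {1,…,r}, and let λ = (λ_1,…,λ_r) be a dominant weight (λ_a ≥ 0 for all a). Let (C(c,ℓ), ρ) be the Grossberg–Karshon twisted cube associated to λ and I via c_{jk} = A_{i_j i_k} and ℓ_j = λ_{i_j}. Then (C(c,ℓ), ρ) is untwisted if and only if I is hesitant-λ-walk-avoiding. -/
open Finset

namespace GKProof

open Finset

variable {r n : ℕ} (A : Matrix (Fin r) (Fin r) ℤ) (lam : Fin r → ℤ) (i : Fin n → Fin r)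

/-- A `λ`-walk (in ℕ-indexed form) of length `s` along positions `J 0 < J 1 < … < J s`. -/
def LWn (s : ℕ) (J : ℕ → Fin n) : Prop :=
  (∀ v v', v < v' → v' ≤ s → J v < J v') ∧
  (∀ v, v + 1 ≤ s → i (J v) ≠ i (J (v+1)) ∧ A (i (J v)) (i (J (v+1))) < 0) ∧
  0 < lam (i (J s))

/-- Position `k` is dead: no `λ`-walk starts at `k`. -/
def Dead (k : Fin n) : Prop := ¬ ∃ s J, LWn A lam i s J ∧ J 0 = k

/-- A hesitant `λ`-walk in ℕ-indexed form. -/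
def HWn (s : ℕ) (J : ℕ → Fin n) : Prop :=
  1 ≤ s ∧ (∀ v v', v < v' → v' ≤ s → J v < J v') ∧ i (J 0) = i (J 1) ∧
  (∀ v, 1 ≤ v → v + 1 ≤ s → i (J v) ≠ i (J (v+1)) ∧ A (i (J v)) (i (J (v+1))) < 0) ∧
  0 < lam (i (J s))

lemma dead_lam (hlam : ∀ a, 0 ≤ lam a) {k : Fin n} (hk : Dead A lam i k) :
    lam (i k) = 0 := by
  by_contra h
  exact hk ⟨0, fun _ => k, ⟨fun v v' hv hv' => by omega, fun v hv => by omega,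
    lt_of_le_of_ne (hlam _) (Ne.symm h)⟩, rfl⟩

lemma dead_prop (hA : ∀ a b, a ≠ b → A a b ≤ 0) {k m : Fin n} (hk : Dead A lam i k)
    (hkm : k < m) (hne : A (i k) (i m) ≠ 0) : Dead A lam i m := by
  rintro ⟨s, J, ⟨hmono, hpair, hlast⟩, h0⟩
  by_cases him : i m = i k
  · refine hk ⟨s, fun v => if v = 0 then k else J v, ⟨?_, ?_, ?_⟩, rfl⟩
    · intro v v' hv hv'
      have hv'0 : v' ≠ 0 := by omega
      simp only [hv'0, if_neg]
      by_cases hv0 : v = 0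
      · simp only [hv0, if_pos rfl]
        rcases Nat.eq_or_lt_of_le (Nat.one_le_iff_ne_zero.2 hv'0) with h1 | h1
        · rw [← h1] at *; calc k < m := hkm
            _ = J 0 := h0.symm
            _ ≤ J 1 := by rcases Nat.eq_zero_or_pos s with rfl | hs
                          · omega
                          · exact le_of_lt (hmono 0 1 one_pos hs)
          -- fallback handled below
        · exact lt_trans (h0 ▸ hkm) (hmono 0 v' (by omega) hv')
      · simp only [hv0, if_neg]
        exact hmono v v' hv hv'
    · intro v hv
      by_cases hv0 : v = 0
      · subst hv0
        simp only [if_pos rfl, if_neg (by omega : (0:ℕ)+1 ≠ 0)]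
        have := hpair 0 hv
        rw [h0, him] at this
        exact this
      · simp only [hv0, if_neg, if_neg (by omega : v+1 ≠ 0)]
        exact hpair v hv
    · by_cases hs : s = 0
      · subst hs; simp only [if_pos rfl]
        rw [h0, him] at hlast
        exact hlast
      · simp only [if_neg hs]; exact hlast
  · have hlt : A (i k) (i m) < 0 :=
      lt_of_le_of_ne (hA _ _ (fun h => him h.symm)) hne
    refine hk ⟨s + 1, fun v => if v = 0 then k else J (v - 1), ⟨?_, ?_, ?_⟩, rfl⟩
    · intro v v' hv hv'
      have hv'0 : v' ≠ 0 := by omega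
      simp only [hv'0, if_neg]
      by_cases hv0 : v = 0
      · simp only [hv0, if_pos rfl]
        rcases Nat.eq_or_lt_of_le (Nat.one_le_iff_ne_zero.2 hv'0) with h1 | h1
        · rw [← h1]; simpa [h0] using hkm
        · exact lt_trans (h0 ▸ hkm) (hmono 0 (v'-1) (by omega) (by omega))
      · simp only [hv0, if_neg]
        exact hmono (v-1) (v'-1) (by omega) (by omega)
    · intro v hv
      by_cases hv0 : v = 0
      · subst hv0
        simp only [if_pos rfl, if_neg (by omega : (0:ℕ)+1 ≠ 0)]
        rw [h0]
        exact ⟨fun h => him h.symm, hlt⟩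
      · simp only [hv0, if_neg, if_neg (by omega : v+1 ≠ 0)]
        have : v + 1 - 1 = (v-1) + 1 := by omega
        rw [this]
        exact hpair (v-1) (by omega)
    · simp only [if_neg (by omega : s+1 ≠ 0)]
      simpa using hlast

lemma avoid_pairs (hav : HesitantLambdaWalkAvoiding A lam i) :
    ∀ p q : Fin n, p < q → i p = i q → Dead A lam i q := by
  intro p q hpq hipq
  rintro ⟨s, J, ⟨hmono, hpair, hlast⟩, h0⟩
  apply hav
  refine ⟨s + 1, fun t => if t.val = 0 then p else J (t.val - 1), ?_, ?_, ?_, ?_, ?_⟩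
  · intro t t' htt'
    have h : t.val < t'.val := htt'
    have ht'0 : t'.val ≠ 0 := by omega
    simp only [ht'0, if_neg]
    by_cases ht0 : t.val = 0
    · simp only [ht0, if_pos]
      rcases Nat.eq_or_lt_of_le (Nat.one_le_iff_ne_zero.2 ht'0) with h1 | h1
      · rw [← h1]; simpa [h0] using hpq
      · calc p < q := hpq
          _ = J 0 := h0.symm
          _ < J (t'.val - 1) := hmono 0 (t'.val - 1) (by omega) (by have := t'.2; omega)
    · simp only [ht0, if_neg]
      exact hmono (t.val - 1) (t'.val - 1) (by omega) (by have := t'.2; omega)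
  · exact Nat.le_add_left 1 s
  · have E0 : (i ∘ fun (t : Fin (s+2)) => if t.val = 0 then p else J (t.val - 1)) 0
        = i p := by
      simp [Function.comp]
    have E1 : (i ∘ fun (t : Fin (s+2)) => if t.val = 0 then p else J (t.val - 1)) 1
        = i (J 0) := by
      have h1 : (1 : Fin (s+2)).val = 1 := rfl
      simp [Function.comp, h1]
    rw [E0, E1, hipq, h0]
  · intro t ht
    have E1 : (i ∘ fun (t' : Fin (s+2)) => if t'.val = 0 then p else J (t'.val - 1))
        t.castSucc = i (J (t.val - 1)) := by
      have hc : (t.castSucc).val = t.val := rfl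
      simp only [Function.comp_apply, hc, if_neg (show ¬ t.val = 0 by omega)]
    have E2 : (i ∘ fun (t' : Fin (s+2)) => if t'.val = 0 then p else J (t'.val - 1))
        t.succ = i (J ((t.val - 1) + 1)) := by
      have hs : (t.succ).val = t.val + 1 := rfl
      simp only [Function.comp_apply, hs, if_neg (show ¬ t.val + 1 = 0 by omega)]
      congr 2
      omega
    rw [E1, E2]
    exact hpair (t.val - 1) (by have := t.2; omega)
  · have E : (i ∘ fun (t : Fin (s+2)) => if t.val = 0 then p else J (t.val - 1))
        (Fin.last (s+1)) = i (J s) := by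
      have hl : (Fin.last (s+1)).val = s + 1 := rfl
      simp only [Function.comp_apply, hl, if_neg (show ¬ s + 1 = 0 by omega),
        Nat.add_sub_cancel]
    rw [E]
    exact hlast

lemma exists_HWn (hav : ¬ HesitantLambdaWalkAvoiding A lam i) :
    ∃ s J, HWn A lam i s J := by
  rw [HesitantLambdaWalkAvoiding, not_not] at hav
  obtain ⟨s, j, hmono, hs1, h01, hdw, hlast⟩ := hav
  refine ⟨s, fun v => j ⟨min v s, by omega⟩, hs1, ?_, ?_, ?_, ?_⟩
  · intro v v' hv hv'
    have e1 : min v s = v := min_eq_left (by omega)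
    have e2 : min v' s = v' := min_eq_left hv'
    exact hmono (by simp only [e1, e2, Fin.mk_lt_mk]; exact hv)
  · show i (j ⟨min 0 s, by omega⟩) = i (j ⟨min 1 s, by omega⟩)
    have h01' := h01
    simp only [Function.comp_apply] at h01'
    have e0 : (⟨min 0 s, by omega⟩ : Fin (s+1)) = 0 := by ext; simp
    have e1 : (⟨min 1 s, by omega⟩ : Fin (s+1)) = 1 := by
      ext; simp [min_eq_left hs1, Fin.val_one', Nat.mod_eq_of_lt (by omega : 1 < s + 1)]
    rw [e0, e1]
    exact h01'
  · intro v hv1 hv2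
    have := hdw ⟨v, by omega⟩ hv1
    simp only [Function.comp_apply] at this
    show i (j ⟨min v s, by omega⟩) ≠ i (j ⟨min (v+1) s, by omega⟩) ∧
      A (i (j ⟨min v s, by omega⟩)) (i (j ⟨min (v+1) s, by omega⟩)) < 0
    have ec : (⟨v, by omega⟩ : Fin s).castSucc = (⟨min v s, by omega⟩ : Fin (s+1)) := by
      ext; simp [min_eq_left (by omega : v ≤ s)]
    have es : (⟨v, by omega⟩ : Fin s).succ = (⟨min (v+1) s, by omega⟩ : Fin (s+1)) := by
      ext; simp [min_eq_left hv2]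
    rw [ec, es] at this
    exact this
  · show 0 < lam (i (j ⟨min s s, by omega⟩))
    have hlast' := hlast
    simp only [Function.comp_apply] at hlast'
    have el : (⟨min s s, by omega⟩ : Fin (s+1)) = Fin.last s := by ext; simp
    rw [el]
    exact hlast'

lemma GKA_def {n : ℕ} (c : Fin n → Fin n → ℤ) (ℓ : Fin n → ℤ) (j : Fin n)
    (x : Fin n → ℝ) : GKA c ℓ j x =
    (ℓ j : ℝ) - ∑ k ∈ Finset.univ.filter (fun k : Fin n => j < k), (c j k : ℝ) * x k := rfl

/-- The `c`, `ℓ` data attached to `A`, `λ`, `i`. -/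
def Ac : Fin n → Fin n → ℤ := fun j k => A (i j) (i k)

def Lc : Fin n → ℤ := fun j => lam (i j)

/-- The candidate polytope: all coordinates trapped in the nonnegative branch. -/
def Pset : Set (Fin n → ℝ) :=
  {x | ∀ j, 0 ≤ x j ∧ x j ≤ GKA (Ac A i) (Lc lam i) j x}

lemma main_ind (hoff : ∀ a b, a ≠ b → A a b ≤ 0) (hlam : ∀ a, 0 ≤ lam a)
    (hdead : ∀ p q : Fin n, p < q → i p = i q → Dead A lam i q)
    (x : Fin n → ℝ)
    (hx : ∀ j, 0 ≤ GKA (Ac A i) (Lc lam i) j x →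
      0 ≤ x j ∧ x j ≤ GKA (Ac A i) (Lc lam i) j x) :
    ∀ j, 0 ≤ GKA (Ac A i) (Lc lam i) j x ∧ (Dead A lam i j → x j = 0) := by
  suffices H : ∀ m : ℕ, ∀ j : Fin n, n - j.val ≤ m →
      (0 ≤ GKA (Ac A i) (Lc lam i) j x ∧ (Dead A lam i j → x j = 0)) by
    intro j; exact H n j (by omega)
  intro m
  induction m with
  | zero => intro j hj; exfalso; have := j.2; omega
  | succ m IH =>
    intro j hj
    have hup : ∀ k : Fin n, j < k → (0 ≤ x k ∧ (Dead A lam i k → x k = 0)) := by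
      intro k hk
      have hvk : j.val < k.val := hk
      have h2 := IH k (by omega)
      exact ⟨(hx k h2.1).1, h2.2⟩
    by_cases hd : Dead A lam i j
    · have hz : GKA (Ac A i) (Lc lam i) j x = 0 := by
        rw [GKA_def]
        have hl0 : ((Lc lam i j : ℤ) : ℝ) = 0 := by
          simp only [Lc, dead_lam A lam i hlam hd, Int.cast_zero]
        rw [hl0]
        have hsum : (∑ k ∈ Finset.univ.filter (fun k : Fin n => j < k),
            ((Ac A i j k : ℤ) : ℝ) * x k) = 0 := by
          apply Finset.sum_eq_zero
          intro k hk
          rw [Finset.mem_filter] at hk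
          by_cases hc0 : A (i j) (i k) = 0
          · simp only [Ac, hc0, Int.cast_zero, zero_mul]
          · have hdk : Dead A lam i k := dead_prop A lam i hoff hd hk.2 hc0
            rw [(hup k hk.2).2 hdk, mul_zero]
        rw [hsum]; ring
      refine ⟨le_of_eq hz.symm, fun _ => ?_⟩
      have h2 := hx j (le_of_eq hz.symm)
      rw [hz] at h2
      linarith [h2.1, h2.2]
    · refine ⟨?_, fun h => absurd h hd⟩
      rw [GKA_def, sub_nonneg]
      have hsum : (∑ k ∈ Finset.univ.filter (fun k : Fin n => j < k),
          ((Ac A i j k : ℤ) : ℝ) * x k) ≤ 0 := by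
        apply Finset.sum_nonpos
        intro k hk
        rw [Finset.mem_filter] at hk
        by_cases him : i k = i j
        · have hdk : Dead A lam i k := hdead j k hk.2 him.symm
          rw [(hup k hk.2).2 hdk, mul_zero]
        · have hc : A (i j) (i k) ≤ 0 := hoff _ _ (fun h => him h.symm)
          have hc' : ((Ac A i j k : ℤ) : ℝ) ≤ 0 := by
            simp only [Ac]; exact_mod_cast hc
          exact mul_nonpos_of_nonpos_of_nonneg hc' (hup k hk.2).1
      calc (∑ k ∈ Finset.univ.filter (fun k : Fin n => j < k),
          ((Ac A i j k : ℤ) : ℝ) * x k) ≤ 0 := hsum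
        _ ≤ ((Lc lam i j : ℤ) : ℝ) := by
            simp only [Lc]; exact_mod_cast hlam (i j)

lemma cube_eq_Pset (hoff : ∀ a b, a ≠ b → A a b ≤ 0) (hlam : ∀ a, 0 ≤ lam a)
    (hdead : ∀ p q : Fin n, p < q → i p = i q → Dead A lam i q) :
    GKcube (Ac A i) (Lc lam i) = Pset A lam i := by
  ext x
  constructor
  · intro hx j
    have hx' : ∀ j, 0 ≤ GKA (Ac A i) (Lc lam i) j x →
        0 ≤ x j ∧ x j ≤ GKA (Ac A i) (Lc lam i) j x := by
      intro j hj
      rcases hx j with h | h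
      · exfalso; linarith [h.1, h.2]
      · exact h
    have h := main_ind A lam i hoff hlam hdead x hx' j
    exact hx' j h.1
  · intro hx j
    exact Or.inr (hx j)

lemma Pset_closed : IsClosed (Pset A lam i) := by
  have : Pset A lam i = ⋂ j : Fin n,
      ({x : Fin n → ℝ | 0 ≤ x j} ∩ {x | x j ≤ GKA (Ac A i) (Lc lam i) j x}) := by
    ext x; simp [Pset, Set.mem_iInter, Set.mem_setOf_eq, forall_and]
  rw [this]
  refine isClosed_iInter (fun j => IsClosed.inter ?_ ?_)
  · exact isClosed_le continuous_const (continuous_apply j)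
  · refine isClosed_le (continuous_apply j) ?_
    show Continuous fun x : Fin n → ℝ => ((Lc lam i j : ℤ) : ℝ) -
      ∑ k ∈ Finset.univ.filter (fun k : Fin n => j < k), ((Ac A i j k : ℤ) : ℝ) * x k
    exact continuous_const.sub (continuous_finset_sum _
      (fun k _ => continuous_const.mul (continuous_apply k)))

lemma Pset_convex : Convex ℝ (Pset A lam i) := by
  have : Pset A lam i = ⋂ j : Fin n,
      ({x : Fin n → ℝ | 0 ≤ x j} ∩
        {x | x j + ∑ k ∈ Finset.univ.filter (fun k : Fin n => j < k),
          ((Ac A i j k : ℤ) : ℝ) * x k ≤ ((Lc lam i j : ℤ) : ℝ)}) := by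
    ext x
    simp only [Pset, Set.mem_iInter, Set.mem_setOf_eq, Set.mem_inter_iff, GKA_def]
    constructor
    · intro h j; exact ⟨(h j).1, by linarith [(h j).2]⟩
    · intro h j; exact ⟨(h j).1, by linarith [(h j).2]⟩
  rw [this]
  refine convex_iInter (fun j => Convex.inter ?_ ?_)
  · exact convex_halfSpace_ge ⟨fun a b => rfl, fun a b => rfl⟩ 0
  · refine convex_halfSpace_le ⟨fun a b => ?_, fun a b => ?_⟩ _
    · simp only [Pi.add_apply, mul_add, Finset.sum_add_distrib]; ring
    · simp only [Pi.smul_apply, smul_eq_mul, mul_add, Finset.mul_sum]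
      congr 1
      exact Finset.sum_congr rfl (fun k _ => by ring)

/-- The parametrization of the untwisted cube by `[0,1]^n`. -/
noncomputable def Phi {n : ℕ} (c : Fin n → Fin n → ℤ) (ℓ : Fin n → ℤ)
    (t : Fin n → ℝ) (j : Fin n) : ℝ :=
  t j * ((ℓ j : ℝ) - ∑ k ∈ (Finset.univ.filter fun k : Fin n => j < k).attach,
    (c j k.1 : ℝ) * Phi c ℓ t k.1)
termination_by n - j.val
decreasing_by
  have h := k.2
  simp only [Finset.mem_filter, Finset.mem_univ, true_and, Fin.lt_def] at h
  omega

lemma Phi_apply {n : ℕ} (c : Fin n → Fin n → ℤ) (ℓ : Fin n → ℤ)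
    (t : Fin n → ℝ) (j : Fin n) :
    Phi c ℓ t j = t j * GKA c ℓ j (Phi c ℓ t) := by
  rw [Phi, GKA_def,
    Finset.sum_attach (Finset.univ.filter fun k : Fin n => j < k)
      (fun k => (c j k : ℝ) * Phi c ℓ t k)]

lemma Phi_congr {n : ℕ} (c : Fin n → Fin n → ℤ) (ℓ : Fin n → ℤ)
    {t t' : Fin n → ℝ} :
    ∀ (j : Fin n), (∀ k, j ≤ k → t k = t' k) → Phi c ℓ t j = Phi c ℓ t' j := by
  suffices H : ∀ m : ℕ, ∀ j : Fin n, n - j.val ≤ m →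
      (∀ k, j ≤ k → t k = t' k) → Phi c ℓ t j = Phi c ℓ t' j by
    intro j h; exact H n j (by omega) h
  intro m
  induction m with
  | zero => intro j hj; exfalso; have := j.2; omega
  | succ m IH =>
    intro j hj h
    rw [Phi_apply, Phi_apply, GKA_def, GKA_def, h j (le_refl j)]
    have hs : ∑ k ∈ Finset.univ.filter (fun k : Fin n => j < k), (c j k : ℝ) * Phi c ℓ t k
        = ∑ k ∈ Finset.univ.filter (fun k : Fin n => j < k), (c j k : ℝ) * Phi c ℓ t' k := by
      refine Finset.sum_congr rfl (fun k hk => ?_)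
      rw [Finset.mem_filter] at hk
      have hjk : j.val < k.val := hk.2
      rw [IH k (by omega) (fun k' hk' => h k' (le_trans (le_of_lt hk.2) hk'))]
    rw [hs]

lemma Phi_affine {n : ℕ} (c : Fin n → Fin n → ℤ) (ℓ : Fin n → ℤ)
    (p : Fin n) (t : Fin n → ℝ) :
    ∀ j, Phi c ℓ t j = (1 - t p) * Phi c ℓ (Function.update t p 0) j
      + t p * Phi c ℓ (Function.update t p 1) j := by
  suffices H : ∀ m : ℕ, ∀ j : Fin n, n - j.val ≤ m →
      Phi c ℓ t j = (1 - t p) * Phi c ℓ (Function.update t p 0) j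
      + t p * Phi c ℓ (Function.update t p 1) j by
    intro j; exact H n j (by omega)
  intro m
  induction m with
  | zero => intro j hj; exfalso; have := j.2; omega
  | succ m IH =>
    intro j hj
    rcases lt_trichotomy j p with hjp | hjp | hjp
    · -- j < p : use IH on all later coordinates
      have hj0 : Function.update t p 0 j = t j := Function.update_of_ne (ne_of_lt hjp) _ _
      have hj1 : Function.update t p 1 j = t j := Function.update_of_ne (ne_of_lt hjp) _ _
      have hsum : ∑ k ∈ Finset.univ.filter (fun k : Fin n => j < k),
            (c j k : ℝ) * Phi c ℓ t k
          = (1 - t p) * ∑ k ∈ Finset.univ.filter (fun k : Fin n => j < k),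
              (c j k : ℝ) * Phi c ℓ (Function.update t p 0) k
            + t p * ∑ k ∈ Finset.univ.filter (fun k : Fin n => j < k),
              (c j k : ℝ) * Phi c ℓ (Function.update t p 1) k := by
        rw [Finset.mul_sum, Finset.mul_sum, ← Finset.sum_add_distrib]
        refine Finset.sum_congr rfl (fun k hk => ?_)
        rw [Finset.mem_filter] at hk
        have hjk : j.val < k.val := hk.2
        rw [IH k (by omega)]
        ring
      rw [Phi_apply, Phi_apply, Phi_apply, GKA_def, GKA_def, GKA_def, hsum, hj0, hj1]
      ring
    · -- j = p
      subst hjp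
      have hj0 : Function.update t j 0 j = 0 := Function.update_self _ _ _
      have hj1 : Function.update t j 1 j = 1 := Function.update_self _ _ _
      have e0 : Phi c ℓ (Function.update t j 0) j = 0 := by
        rw [Phi_apply, hj0, zero_mul]
      have e1 : GKA c ℓ j (Phi c ℓ (Function.update t j 1)) = GKA c ℓ j (Phi c ℓ t) := by
        rw [GKA_def, GKA_def]
        have hs : ∑ k ∈ Finset.univ.filter (fun k : Fin n => j < k),
              (c j k : ℝ) * Phi c ℓ (Function.update t j 1) k
            = ∑ k ∈ Finset.univ.filter (fun k : Fin n => j < k),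
              (c j k : ℝ) * Phi c ℓ t k := by
          refine Finset.sum_congr rfl (fun k hk => ?_)
          rw [Finset.mem_filter] at hk
          rw [Phi_congr c ℓ k (fun k' hk' =>
            Function.update_of_ne (ne_of_gt (lt_of_lt_of_le hk.2 hk')) _ _)]
        rw [hs]
      rw [Phi_apply c ℓ t j, e0, Phi_apply, e1, hj1]
      ring
    · -- p < j : all three agree
      have e0 : Phi c ℓ (Function.update t p 0) j = Phi c ℓ t j :=
        Phi_congr c ℓ j (fun k hk => Function.update_of_ne (ne_of_gt (lt_of_lt_of_le hjp hk)) _ _)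
      have e1 : Phi c ℓ (Function.update t p 1) j = Phi c ℓ t j :=
        Phi_congr c ℓ j (fun k hk => Function.update_of_ne (ne_of_gt (lt_of_lt_of_le hjp hk)) _ _)
      rw [e0, e1]
      ring

lemma Phi_mem (hoff : ∀ a b, a ≠ b → A a b ≤ 0) (hlam : ∀ a, 0 ≤ lam a)
    (hdead : ∀ p q : Fin n, p < q → i p = i q → Dead A lam i q)
    (t : Fin n → ℝ) (ht : ∀ k, 0 ≤ t k ∧ t k ≤ 1) :
    Phi (Ac A i) (Lc lam i) t ∈ Pset A lam i := by
  have hx : ∀ j, 0 ≤ GKA (Ac A i) (Lc lam i) j (Phi (Ac A i) (Lc lam i) t) →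
      0 ≤ Phi (Ac A i) (Lc lam i) t j ∧
      Phi (Ac A i) (Lc lam i) t j ≤ GKA (Ac A i) (Lc lam i) j (Phi (Ac A i) (Lc lam i) t) := by
    intro j hj
    rw [Phi_apply]
    constructor
    · exact mul_nonneg (ht j).1 hj
    · calc t j * GKA (Ac A i) (Lc lam i) j (Phi (Ac A i) (Lc lam i) t)
          ≤ 1 * GKA (Ac A i) (Lc lam i) j (Phi (Ac A i) (Lc lam i) t) :=
            mul_le_mul_of_nonneg_right (ht j).2 hj
        _ = _ := one_mul _
  intro j
  exact hx j (main_ind A lam i hoff hlam hdead _ hx j).1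

lemma Phi_surj (x : Fin n → ℝ) (hx : x ∈ Pset A lam i) :
    ∃ t : Fin n → ℝ, (∀ k, 0 ≤ t k ∧ t k ≤ 1) ∧ Phi (Ac A i) (Lc lam i) t = x := by
  classical
  refine ⟨fun j => if GKA (Ac A i) (Lc lam i) j x = 0 then 0
      else x j / GKA (Ac A i) (Lc lam i) j x, fun k => ?_, ?_⟩
  · by_cases h : GKA (Ac A i) (Lc lam i) k x = 0
    · simp [h]
    · have hG0 : 0 < GKA (Ac A i) (Lc lam i) k x :=
        lt_of_le_of_ne (le_trans (hx k).1 (hx k).2) (Ne.symm h)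
      simp only [h, if_neg, if_false]
      exact ⟨div_nonneg (hx k).1 (le_of_lt hG0), (div_le_one hG0).2 (hx k).2⟩
  · funext j
    suffices H : ∀ m : ℕ, ∀ j : Fin n, n - j.val ≤ m →
        Phi (Ac A i) (Lc lam i) (fun j => if GKA (Ac A i) (Lc lam i) j x = 0 then 0
          else x j / GKA (Ac A i) (Lc lam i) j x) j = x j by
      exact H n j (by omega)
    intro m
    induction m with
    | zero => intro j hj; exfalso; have := j.2; omega
    | succ m IH =>
      intro j hj
      have hGA : GKA (Ac A i) (Lc lam i) j
          (Phi (Ac A i) (Lc lam i) (fun j => if GKA (Ac A i) (Lc lam i) j x = 0 then 0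
            else x j / GKA (Ac A i) (Lc lam i) j x)) = GKA (Ac A i) (Lc lam i) j x := by
        rw [GKA_def (Ac A i) (Lc lam i) j, GKA_def (Ac A i) (Lc lam i) j]
        have hs : ∑ k ∈ Finset.univ.filter (fun k : Fin n => j < k),
            ((Ac A i j k : ℤ) : ℝ) * Phi (Ac A i) (Lc lam i)
              (fun j => if GKA (Ac A i) (Lc lam i) j x = 0 then 0
                else x j / GKA (Ac A i) (Lc lam i) j x) k
            = ∑ k ∈ Finset.univ.filter (fun k : Fin n => j < k),
              ((Ac A i j k : ℤ) : ℝ) * x k := by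
          refine Finset.sum_congr rfl (fun k hk => ?_)
          rw [Finset.mem_filter] at hk
          have hjk : j.val < k.val := hk.2
          rw [IH k (by omega)]
        rw [hs]
      rw [Phi_apply, hGA]
      by_cases h : GKA (Ac A i) (Lc lam i) j x = 0
      · simp only [h, if_pos, if_true, zero_mul]
        have h1 := (hx j).1
        have h2 := (hx j).2
        rw [h] at h2
        linarith
      · simp only [h, if_neg, if_false]
        exact div_mul_cancel₀ (x j) h

open Classical in
/-- The vertex set. -/
noncomputable def Vtx : Finset (Fin n → ℝ) :=
  (Finset.univ : Finset (Fin n → Bool)).image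
    (fun σ => Phi (Ac A i) (Lc lam i) (fun k => if σ k then 1 else 0))

lemma Phi_mem_hull (t : Fin n → ℝ) (ht : ∀ k, 0 ≤ t k ∧ t k ≤ 1) :
    Phi (Ac A i) (Lc lam i) t ∈ convexHull ℝ ((Vtx A lam i : Finset (Fin n → ℝ)) : Set (Fin n → ℝ)) := by
  classical
  suffices H : ∀ m : ℕ, ∀ t : Fin n → ℝ, (∀ k, 0 ≤ t k ∧ t k ≤ 1) →
      (Finset.univ.filter (fun j => t j ≠ 0 ∧ t j ≠ 1)).card ≤ m →
      Phi (Ac A i) (Lc lam i) t ∈ convexHull ℝ ((Vtx A lam i : Finset (Fin n → ℝ)) : Set (Fin n → ℝ)) by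
    exact H n t ht (le_trans (Finset.card_le_univ _) (by simp))
  intro m
  induction m with
  | zero =>
    intro t ht hc
    have hall : ∀ j, t j = 0 ∨ t j = 1 := by
      intro j
      by_contra h
      push_neg at h
      have : j ∈ Finset.univ.filter (fun j => t j ≠ 0 ∧ t j ≠ 1) := by
        simp [h.1, h.2]
      have := Finset.card_pos.2 ⟨j, this⟩
      omega
    apply subset_convexHull
    simp only [Vtx, Finset.coe_image, Set.mem_image, Finset.mem_coe, Finset.mem_image]
    refine ⟨fun k => if t k = 1 then true else false, Finset.mem_univ _, ?_⟩
    have he : (fun k => if (if t k = 1 then true else false) = true then (1:ℝ) else 0) = t := by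
      funext k
      rcases hall k with h | h
      · rw [h]; norm_num
      · rw [h]; norm_num
    rw [he]
  | succ m IH =>
    intro t ht hc
    by_cases hne : (Finset.univ.filter (fun j => t j ≠ 0 ∧ t j ≠ 1)).Nonempty
    · obtain ⟨p, hp⟩ := hne
      have hpf := (Finset.mem_filter.mp hp).2
      have hcard : ∀ b : ℝ, (Finset.univ.filter
          (fun j => Function.update t p b j ≠ 0 ∧ Function.update t p b j ≠ 1)).card ≤ m → True :=
        fun _ _ => trivial
      have hsub : ∀ b : ℝ, b = 0 ∨ b = 1 → (Finset.univ.filter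
          (fun j => Function.update t p b j ≠ 0 ∧ Function.update t p b j ≠ 1)) ⊆
          (Finset.univ.filter (fun j => t j ≠ 0 ∧ t j ≠ 1)).erase p := by
        intro b hb j hj
        rw [Finset.mem_filter] at hj
        have hjp : j ≠ p := by
          intro h
          subst h
          rw [Function.update_self] at hj
          rcases hb with rfl | rfl
          · exact hj.2.1 rfl
          · exact hj.2.2 rfl
        rw [Finset.mem_erase]
        refine ⟨hjp, ?_⟩
        rw [Function.update_of_ne hjp] at hj
        simp [hj.2.1, hj.2.2]
      have hple : (Finset.univ.filter (fun j => t j ≠ 0 ∧ t j ≠ 1)).card ≤ m + 1 := hc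
      have herase : ((Finset.univ.filter (fun j => t j ≠ 0 ∧ t j ≠ 1)).erase p).card
          = (Finset.univ.filter (fun j => t j ≠ 0 ∧ t j ≠ 1)).card - 1 :=
        Finset.card_erase_of_mem hp
      have hpos : 0 < (Finset.univ.filter (fun j => t j ≠ 0 ∧ t j ≠ 1)).card :=
        Finset.card_pos.2 ⟨p, hp⟩
      have hcard0 : (Finset.univ.filter (fun j => Function.update t p 0 j ≠ 0 ∧
          Function.update t p 0 j ≠ 1)).card ≤ m := by
        have := Finset.card_le_card (hsub 0 (Or.inl rfl))
        omega
      have hcard1 : (Finset.univ.filter (fun j => Function.update t p 1 j ≠ 0 ∧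
          Function.update t p 1 j ≠ 1)).card ≤ m := by
        have := Finset.card_le_card (hsub 1 (Or.inr rfl))
        omega
      have hb : ∀ b : ℝ, 0 ≤ b → b ≤ 1 → ∀ k, 0 ≤ Function.update t p b k ∧
          Function.update t p b k ≤ 1 := by
        intro b hb0 hb1 k
        by_cases h : k = p
        · subst h; rw [Function.update_self]; exact ⟨hb0, hb1⟩
        · rw [Function.update_of_ne h]; exact ht k
      have h0 := IH (Function.update t p 0) (hb 0 le_rfl zero_le_one) hcard0
      have h1 := IH (Function.update t p 1) (hb 1 zero_le_one le_rfl) hcard1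
      have heq : Phi (Ac A i) (Lc lam i) t =
          (1 - t p) • Phi (Ac A i) (Lc lam i) (Function.update t p 0)
          + t p • Phi (Ac A i) (Lc lam i) (Function.update t p 1) := by
        funext j
        simp only [Pi.add_apply, Pi.smul_apply, smul_eq_mul]
        exact Phi_affine _ _ p t j
      rw [heq]
      exact (convex_convexHull ℝ _) h0 h1 (by linarith [(ht p).2]) (ht p).1 (by ring)
    · rw [Finset.not_nonempty_iff_eq_empty] at hne
      exact IH t ht (by rw [hne]; simp)

lemma Pset_hull (hoff : ∀ a b, a ≠ b → A a b ≤ 0) (hlam : ∀ a, 0 ≤ lam a)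
    (hdead : ∀ p q : Fin n, p < q → i p = i q → Dead A lam i q) :
    Pset A lam i = convexHull ℝ ((Vtx A lam i : Finset (Fin n → ℝ)) : Set (Fin n → ℝ)) := by
  apply le_antisymm
  · intro x hx
    obtain ⟨t, ht, hPhi⟩ := Phi_surj A lam i x hx
    rw [← hPhi]
    exact Phi_mem_hull A lam i t ht
  · apply convexHull_min ?_ (Pset_convex A lam i)
    intro x hx
    simp only [Vtx, Finset.coe_image, Set.mem_image, Finset.mem_coe] at hx
    obtain ⟨σ, _, rfl⟩ := hx
    apply Phi_mem A lam i hoff hlam hdead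
    intro k
    by_cases h : σ k <;> simp [h]

lemma untwisted_of_avoiding (hoff : ∀ a b, a ≠ b → A a b ≤ 0) (hlam : ∀ a, 0 ≤ lam a)
    (hav : HesitantLambdaWalkAvoiding A lam i) :
    GKUntwisted (Ac A i) (Lc lam i) := by
  have hdead := avoid_pairs A lam i hav
  have hc := cube_eq_Pset A lam i hoff hlam hdead
  refine ⟨?_, ?_, ?_, ?_⟩
  · rw [hc]; exact Pset_closed A lam i
  · rw [hc]; exact Pset_convex A lam i
  · exact ⟨Vtx A lam i, by rw [hc]; exact Pset_hull A lam i hoff hlam hdead⟩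
  · intro x hx
    have hxP : x ∈ Pset A lam i := hc ▸ hx
    simp only [GKrho, if_pos hx]
    have hs : ∀ k : Fin n, GKsgn (x k) = -1 := by
      intro k
      rw [GKsgn, if_neg (not_lt.2 (hxP k).1)]
    rw [Finset.prod_congr rfl (fun k _ => hs k), Finset.prod_const]
    rw [Finset.card_univ, Fintype.card_fin, ← pow_add]
    exact Even.neg_one_pow ⟨n, rfl⟩

lemma trunc_walk {s : ℕ} {J : ℕ → Fin n} (hW : HWn A lam i s J) {p : ℕ}
    (hp : 1 ≤ p) (hps : p ≤ s) (hl : 0 < lam (i (J p))) : HWn A lam i p J := by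
  obtain ⟨m1, m2, m3, m4, m5⟩ := hW
  exact ⟨hp, fun v v' h h' => m2 v v' h (le_trans h' hps), m3,
    fun v h h' => m4 v h (by omega), hl⟩

lemma splice_walk {s α β : ℕ} {J : ℕ → Fin n} (hW : HWn A lam i s J)
    (hα : 1 ≤ α) (hαβ : α < β) (hβ : β ≤ s)
    (hpr : i (J α) ≠ i (J β) ∧ A (i (J α)) (i (J β)) < 0) :
    HWn A lam i (s - (β - α - 1)) (fun m => if m ≤ α then J m else J (m + (β - α - 1))) := by
  obtain ⟨m1, m2, m3, m4, m5⟩ := hW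
  refine ⟨by omega, ?_, ?_, ?_, ?_⟩
  · intro v v' hv hv'
    simp only []
    by_cases h1 : v' ≤ α
    · rw [if_pos (by omega : v ≤ α), if_pos h1]
      exact m2 v v' hv (by omega)
    · rw [if_neg h1]
      by_cases h2 : v ≤ α
      · rw [if_pos h2]
        exact m2 v (v' + (β - α - 1)) (by omega) (by omega)
      · rw [if_neg h2]
        exact m2 _ _ (by omega) (by omega)
  · simp only [if_pos (by omega : (0:ℕ) ≤ α), if_pos (by omega : (1:ℕ) ≤ α)]
    exact m3
  · intro v hv1 hv2
    simp only []
    by_cases h1 : v + 1 ≤ α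
    · rw [if_pos (by omega : v ≤ α), if_pos h1]
      exact m4 v hv1 (by omega)
    · by_cases h2 : v ≤ α
      · have hva : v = α := by omega
        rw [if_pos h2, if_neg h1]
        have e : v + 1 + (β - α - 1) = β := by omega
        rw [e, hva]
        exact hpr
      · rw [if_neg h2, if_neg (by omega : ¬ v + 1 ≤ α)]
        have e : v + 1 + (β - α - 1) = (v + (β - α - 1)) + 1 := by omega
        rw [e]
        exact m4 _ (by omega) (by omega)
  · simp only [if_neg (by omega : ¬ (s - (β - α - 1) ≤ α))]
    have e : s - (β - α - 1) + (β - α - 1) = s := by omega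
    rw [e]
    exact m5

lemma minimal_walk (hoff : ∀ a b, a ≠ b → A a b ≤ 0) (hlam : ∀ a, 0 ≤ lam a)
    (hav : ¬ HesitantLambdaWalkAvoiding A lam i) :
    ∃ (s : ℕ) (J : ℕ → Fin n), HWn A lam i s J ∧
      (∀ p q, 1 ≤ p → p < q → q ≤ s → i (J p) ≠ i (J q)) ∧
      (∀ v, 1 ≤ v → v ≤ s - 1 → lam (i (J v)) = 0) ∧
      (∀ v q, 1 ≤ v → v + 2 ≤ q → q ≤ s → A (i (J v)) (i (J q)) = 0) ∧
      (∀ v, 2 ≤ v → v ≤ s → ∀ k : Fin n, k < J v → i k ≠ i (J v)) ∧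
      (∀ k : Fin n, J 0 < k → k < J 1 → i k ≠ i (J 1)) := by
  classical
  have hQ : ∃ s, ∃ J, HWn A lam i s J := exists_HWn A lam i hav
  set s := Nat.find hQ with hsdef
  obtain ⟨J1, hW1⟩ := Nat.find_spec hQ
  have hmin : ∀ s' , s' < s → ¬ ∃ J, HWn A lam i s' J := fun s' h => Nat.find_min hQ h
  obtain ⟨m1, m2, m3, m4, m5⟩ := hW1
  -- maximize the position of the 0-th entry
  have hTne : (Finset.univ.filter (fun k : Fin n => k < J1 1 ∧ i k = i (J1 1))).Nonempty := by
    refine ⟨J1 0, ?_⟩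
    rw [Finset.mem_filter]
    exact ⟨Finset.mem_univ _, m2 0 1 one_pos m1, m3⟩
  set k0 := (Finset.univ.filter (fun k : Fin n => k < J1 1 ∧ i k = i (J1 1))).max' hTne with hk0
  have hk0mem := (Finset.univ.filter (fun k : Fin n => k < J1 1 ∧ i k = i (J1 1))).max'_mem hTne
  rw [Finset.mem_filter] at hk0mem
  set J := fun v => if v = 0 then k0 else J1 v with hJdef
  have hJ0 : J 0 = k0 := by simp [hJdef]
  have hJv : ∀ v, 1 ≤ v → J v = J1 v := by
    intro v hv; rw [hJdef]; simp only [if_neg (by omega : ¬ v = 0)]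
  have hW : HWn A lam i s J := by
    refine ⟨m1, ?_, ?_, ?_, ?_⟩
    · intro v v' hv hv'
      rw [hJv v' (by omega)]
      by_cases h : v = 0
      · subst h
        rw [hJ0]
        rcases Nat.eq_or_lt_of_le (by omega : 1 ≤ v') with h1 | h1
        · rw [← h1]; exact hk0mem.2.1
        · exact lt_trans hk0mem.2.1 (m2 1 v' h1 hv')
      · rw [hJv v (by omega)]
        exact m2 v v' hv hv'
    · rw [hJ0, hJv 1 le_rfl]
      exact hk0mem.2.2
    · intro v hv1 hv2
      rw [hJv v hv1, hJv (v+1) (by omega)]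
      exact m4 v hv1 hv2
    · rw [hJv s m1]
      exact m5
  obtain ⟨w1, w2, w3, w4, w5⟩ := hW
  have F1 : ∀ p q, 1 ≤ p → p < q → q ≤ s → i (J p) ≠ i (J q) := by
    intro p q hp hpq hq heq
    rcases Nat.eq_or_lt_of_le hq with hq' | hq'
    · -- q = s : truncate
      refine hmin p (by omega) ⟨J, trunc_walk A lam i ⟨w1, w2, w3, w4, w5⟩ hp (by omega) ?_⟩
      rw [heq, hq']
      exact w5
    · -- q < s : splice out (p, q]
      refine hmin (s - (q + 1 - p - 1)) (by omega) ⟨_,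
        splice_walk A lam i ⟨w1, w2, w3, w4, w5⟩ hp (by omega : p < q + 1) (by omega) ?_⟩
      rw [heq]
      exact w4 q (by omega) (by omega)
  have F2 : ∀ v, 1 ≤ v → v ≤ s - 1 → lam (i (J v)) = 0 := by
    intro v hv1 hv2
    by_contra h
    exact hmin v (by omega) ⟨J, trunc_walk A lam i ⟨w1, w2, w3, w4, w5⟩ hv1 (by omega)
      (lt_of_le_of_ne (hlam _) (Ne.symm h))⟩
  have F3 : ∀ v q, 1 ≤ v → v + 2 ≤ q → q ≤ s → A (i (J v)) (i (J q)) = 0 := by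
    intro v q hv hvq hq
    have hne := F1 v q hv (by omega) hq
    by_contra h
    have hlt : A (i (J v)) (i (J q)) < 0 := lt_of_le_of_ne (hoff _ _ hne) h
    exact hmin (s - (q - v - 1)) (by omega) ⟨_,
      splice_walk A lam i ⟨w1, w2, w3, w4, w5⟩ hv (by omega) hq ⟨hne, hlt⟩⟩
  have F4 : ∀ v, 2 ≤ v → v ≤ s → ∀ k : Fin n, k < J v → i k ≠ i (J v) := by
    intro v hv2 hvs k hk heq
    refine hmin (s - v + 1) (by omega) ⟨fun m => if m = 0 then k else J (v + m - 1),
      ⟨by omega, ?_, ?_, ?_, ?_⟩⟩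
    · intro m m' hm hm'
      simp only []
      rw [if_neg (by omega : ¬ m' = 0)]
      by_cases h : m = 0
      · rw [if_pos h]
        rcases Nat.eq_or_lt_of_le (by omega : 1 ≤ m') with h1 | h1
        · have e : v + m' - 1 = v := by omega
          rw [e]; exact hk
        · calc k < J v := hk
            _ < J (v + m' - 1) := w2 v (v + m' - 1) (by omega) (by omega)
      · rw [if_neg h]
        exact w2 _ _ (by omega) (by omega)
    · simpa [Nat.add_sub_cancel] using heq
    · intro m hm1 hm2
      simp only []
      rw [if_neg (by omega : ¬ m = 0), if_neg (by omega : ¬ m + 1 = 0)]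
      have e : v + (m + 1) - 1 = (v + m - 1) + 1 := by omega
      rw [e]
      exact w4 (v + m - 1) (by omega) (by omega)
    · simp only [if_neg (by omega : ¬ (s - v + 1) = 0)]
      have e : v + (s - v + 1) - 1 = s := by omega
      rw [e]
      exact w5
  have F5 : ∀ k : Fin n, J 0 < k → k < J 1 → i k ≠ i (J 1) := by
    intro k h0 h1 heq
    have : k ∈ Finset.univ.filter (fun k : Fin n => k < J1 1 ∧ i k = i (J1 1)) := by
      rw [Finset.mem_filter]
      rw [hJv 1 le_rfl] at h1 heq
      exact ⟨Finset.mem_univ _, h1, heq⟩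
    have := Finset.le_max' _ k this
    rw [hJ0] at h0
    exact absurd h0 (not_lt.2 this)
  exact ⟨s, J, ⟨w1, w2, w3, w4, w5⟩, F1, F2, F3, F4, F5⟩

/-- The factor `B_v = (∏_{q=v}^{s-1} -A(a_q,a_{q+1})) · λ(a_s)`. -/
noncomputable def Bv (s : ℕ) (J : ℕ → Fin n) (v : ℕ) : ℝ :=
  (∏ q ∈ Finset.Ico v s, (-(A (i (J q)) (i (J (q+1))) : ℝ))) * (lam (i (J s)) : ℝ)

noncomputable def Yv (s : ℕ) (J : ℕ → Fin n) (v : ℕ) : ℝ :=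
  if v = 0 then -(Bv A lam i s J 1)/2 else Bv A lam i s J v

noncomputable def Xv (s : ℕ) (J : ℕ → Fin n) (k : Fin n) : ℝ :=
  ∑ v ∈ Finset.range (s+1), if J v = k then Yv A lam i s J v else 0

section Construction

variable {s : ℕ} {J : ℕ → Fin n}

lemma Bv_pos (w4 : ∀ v, 1 ≤ v → v + 1 ≤ s → i (J v) ≠ i (J (v+1)) ∧
      A (i (J v)) (i (J (v+1))) < 0)
    (w5 : 0 < lam (i (J s))) (v : ℕ) (hv : 1 ≤ v) : 0 < Bv A lam i s J v := by
  refine mul_pos (Finset.prod_pos fun q hq => ?_) (by exact_mod_cast w5)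
  rw [Finset.mem_Ico] at hq
  have := (w4 q (by omega) (by omega)).2
  have : ((A (i (J q)) (i (J (q+1))) : ℤ) : ℝ) < 0 := by exact_mod_cast this
  linarith

lemma Bv_last : Bv A lam i s J s = (lam (i (J s)) : ℝ) := by
  rw [Bv, Finset.Ico_self, Finset.prod_empty, one_mul]

lemma Bv_step (v : ℕ) (hvs : v < s) :
    Bv A lam i s J v = -(A (i (J v)) (i (J (v+1))) : ℝ) * Bv A lam i s J (v+1) := by
  rw [Bv, Bv, Finset.prod_eq_prod_Ico_succ_bot hvs]
  ring

lemma Xv_walk (w2 : ∀ v v', v < v' → v' ≤ s → J v < J v') (v : ℕ) (hv : v ≤ s) :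
    Xv A lam i s J (J v) = Yv A lam i s J v := by
  rw [Xv]
  rw [Finset.sum_eq_single_of_mem v (Finset.mem_range.2 (by omega))]
  · rw [if_pos rfl]
  · intro v' hv' hne
    rw [Finset.mem_range] at hv'
    have : J v' ≠ J v := by
      rcases Nat.lt_or_ge v' v with h | h
      · exact ne_of_lt (w2 v' v h hv)
      · exact (ne_of_lt (w2 v v' (by omega) (by omega))).symm
    rw [if_neg this]

lemma Xv_non {k : Fin n} (h : ∀ v, v ≤ s → J v ≠ k) : Xv A lam i s J k = 0 := by
  rw [Xv]
  refine Finset.sum_eq_zero (fun v hv => ?_)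
  rw [Finset.mem_range] at hv
  rw [if_neg (h v (by omega))]

lemma GKA_Xv (k : Fin n) :
    GKA (Ac A i) (Lc lam i) k (Xv A lam i s J) = (lam (i k) : ℝ) -
      ∑ v ∈ Finset.range (s+1),
        (if k < J v then (A (i k) (i (J v)) : ℝ) * Yv A lam i s J v else 0) := by
  rw [GKA_def]
  have h1 : ((Lc lam i k : ℤ) : ℝ) = (lam (i k) : ℝ) := rfl
  rw [h1]
  congr 1
  calc ∑ m ∈ Finset.univ.filter (fun m : Fin n => k < m), ((Ac A i k m : ℤ) : ℝ) * Xv A lam i s J m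
      = ∑ m ∈ Finset.univ.filter (fun m : Fin n => k < m), ∑ v ∈ Finset.range (s+1),
          (if J v = m then (A (i k) (i (J v)) : ℝ) * Yv A lam i s J v else 0) := by
        refine Finset.sum_congr rfl (fun m hm => ?_)
        rw [Xv, Finset.mul_sum]
        refine Finset.sum_congr rfl (fun v hv => ?_)
        rw [mul_ite, mul_zero]
        split_ifs with h
        · rw [h]; rfl
        · rfl
    _ = ∑ v ∈ Finset.range (s+1), ∑ m ∈ Finset.univ.filter (fun m : Fin n => k < m),
          (if J v = m then (A (i k) (i (J v)) : ℝ) * Yv A lam i s J v else 0) :=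
        Finset.sum_comm
    _ = ∑ v ∈ Finset.range (s+1),
          (if k < J v then (A (i k) (i (J v)) : ℝ) * Yv A lam i s J v else 0) := by
        refine Finset.sum_congr rfl (fun v hv => ?_)
        rw [Finset.sum_ite_eq (Finset.univ.filter (fun m : Fin n => k < m)) (J v)
          (fun _ => (A (i k) (i (J v)) : ℝ) * Yv A lam i s J v)]
        simp [Finset.mem_filter]

lemma Xv_mem (hdiag : ∀ a, A a a = 2) (hoff : ∀ a b, a ≠ b → A a b ≤ 0)
    (hlam : ∀ a, 0 ≤ lam a)
    (w1 : 1 ≤ s) (w2 : ∀ v v', v < v' → v' ≤ s → J v < J v')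
    (w3 : i (J 0) = i (J 1))
    (w4 : ∀ v, 1 ≤ v → v + 1 ≤ s → i (J v) ≠ i (J (v+1)) ∧ A (i (J v)) (i (J (v+1))) < 0)
    (w5 : 0 < lam (i (J s)))
    (F2 : ∀ v, 1 ≤ v → v ≤ s - 1 → lam (i (J v)) = 0)
    (F3 : ∀ v q, 1 ≤ v → v + 2 ≤ q → q ≤ s → A (i (J v)) (i (J q)) = 0)
    (F4 : ∀ v, 2 ≤ v → v ≤ s → ∀ k : Fin n, k < J v → i k ≠ i (J v))
    (F5 : ∀ k : Fin n, J 0 < k → k < J 1 → i k ≠ i (J 1)) :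
    Xv A lam i s J ∈ GKcube (Ac A i) (Lc lam i) := by
  have hB1 : 0 < Bv A lam i s J 1 := Bv_pos A lam i w4 w5 1 le_rfl
  have hY : ∀ v, 1 ≤ v → Yv A lam i s J v = Bv A lam i s J v := by
    intro v hv; rw [Yv, if_neg (by omega)]
  have hY0 : Yv A lam i s J 0 = -(Bv A lam i s J 1)/2 := by rw [Yv, if_pos rfl]
  have hcmp : ∀ v₀ v, v₀ ≤ s → v ≤ s → (J v₀ < J v ↔ v₀ < v) := by
    intro v₀ v h0 h
    constructor
    · intro hltJ
      by_contra hge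
      push_neg at hge
      rcases Nat.eq_or_lt_of_le hge with h1 | h1
      · rw [h1] at hltJ; exact lt_irrefl _ hltJ
      · exact absurd (w2 v v₀ h1 h0) (not_lt.2 (le_of_lt hltJ))
    · intro h'; exact w2 v₀ v h' h
  have hlam01 : lam (i (J 0)) = lam (i (J 1)) := congrArg lam w3
  intro k
  by_cases hwk : ∃ v, v ≤ s ∧ J v = k
  · obtain ⟨v₀, hv₀s, rfl⟩ := hwk
    have hxval : Xv A lam i s J (J v₀) = Yv A lam i s J v₀ := Xv_walk A lam i w2 v₀ hv₀s
    have hTeq : (∑ v ∈ Finset.range (s+1),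
        (if J v₀ < J v then (A (i (J v₀)) (i (J v)) : ℝ) * Yv A lam i s J v else 0))
        = ∑ v ∈ Finset.range (s+1),
        (if v₀ < v then (A (i (J v₀)) (i (J v)) : ℝ) * Yv A lam i s J v else 0) := by
      refine Finset.sum_congr rfl (fun v hv => ?_)
      rw [Finset.mem_range] at hv
      by_cases h : v₀ < v
      · rw [if_pos ((hcmp v₀ v hv₀s (by omega)).2 h), if_pos h]
      · rw [if_neg (fun hc => h ((hcmp v₀ v hv₀s (by omega)).1 hc)), if_neg h]
    rcases Nat.lt_or_ge v₀ s with hv₀lt | hv₀ge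
    · rcases Nat.eq_zero_or_pos v₀ with rfl | hv₀pos
      · -- k = J 0 : the negative coordinate
        have hT : (∑ v ∈ Finset.range (s+1),
            (if (0:ℕ) < v then (A (i (J 0)) (i (J v)) : ℝ) * Yv A lam i s J v else 0))
            = 2 * Bv A lam i s J 1 + (if 2 ≤ s then -Bv A lam i s J 1 else 0) := by
          rcases Nat.lt_or_ge s 2 with hs2 | hs2
          · -- s = 1
            have hs1 : s = 1 := by omega
            subst hs1
            rw [Finset.sum_range_succ, Finset.sum_range_one, if_neg (lt_irrefl 0),
              if_pos one_pos, hY 1 le_rfl, w3, if_neg (by omega)]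
            have h2 : ((A (i (J 1)) (i (J 1)) : ℤ) : ℝ) = 2 := by
              rw [hdiag]; norm_num
            rw [h2]
            ring
          · -- s ≥ 2
            have hsub : ∑ v ∈ Finset.range (s+1),
                (if (0:ℕ) < v then (A (i (J 0)) (i (J v)) : ℝ) * Yv A lam i s J v else 0)
                = ∑ v ∈ Finset.range 3,
                (if (0:ℕ) < v then (A (i (J 0)) (i (J v)) : ℝ) * Yv A lam i s J v else 0) := by
              symm
              refine Finset.sum_subset (by intro v hv; rw [Finset.mem_range] at *; omega) ?_
              intro v hv hv3
              rw [Finset.mem_range] at hv hv3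
              rw [if_pos (by omega), w3, Int.cast_eq_zero.2 (F3 1 v le_rfl (by omega) (by omega)),
                zero_mul]
            rw [hsub, Finset.sum_range_succ, Finset.sum_range_succ, Finset.sum_range_one,
              if_neg (lt_irrefl 0), if_pos one_pos, if_pos two_pos, hY 1 le_rfl, hY 2 (by omega),
              w3, if_pos hs2]
            have h2 : ((A (i (J 1)) (i (J 1)) : ℤ) : ℝ) = 2 := by
              rw [hdiag]; norm_num
            have hstep := Bv_step A lam i (J := J) 1 (by omega : 1 < s)
            rw [h2]
            have : ((A (i (J 1)) (i (J 2)) : ℤ) : ℝ) * Bv A lam i s J 2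
                = -Bv A lam i s J 1 := by rw [hstep]; ring
            rw [this]
            ring
        have hGKA : GKA (Ac A i) (Lc lam i) (J 0) (Xv A lam i s J) = -Bv A lam i s J 1 := by
          rw [GKA_Xv, hTeq, hT]
          rcases Nat.lt_or_ge s 2 with hs2 | hs2
          · have hs1 : s = 1 := by omega
            rw [if_neg (by omega)]
            have hL : (lam (i (J 0)) : ℝ) = Bv A lam i s J 1 := by
              rw [hlam01]
              rw [show (1:ℕ) = s from hs1.symm, Bv_last]
            rw [hL]
            ring
          · rw [if_pos hs2]
            have hL : (lam (i (J 0)) : ℝ) = 0 := by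
              rw [hlam01, F2 1 le_rfl (by omega)]
              norm_num
            rw [hL]
            ring
        left
        rw [hxval, hY0, hGKA]
        constructor
        · linarith
        · linarith
      · -- 1 ≤ v₀ < s
        have hT : (∑ v ∈ Finset.range (s+1),
            (if v₀ < v then (A (i (J v₀)) (i (J v)) : ℝ) * Yv A lam i s J v else 0))
            = -Bv A lam i s J v₀ := by
          rw [Finset.sum_eq_single_of_mem (v₀+1) (Finset.mem_range.2 (by omega))]
          · rw [if_pos (by omega), hY (v₀+1) (by omega)]
            have hstep := Bv_step A lam i (J := J) v₀ hv₀lt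
            rw [hstep]; ring
          · intro v hv hne
            rw [Finset.mem_range] at hv
            by_cases h : v₀ < v
            · rw [if_pos h, Int.cast_eq_zero.2 (F3 v₀ v hv₀pos (by omega) (by omega)), zero_mul]
            · rw [if_neg h]
        have hGKA : GKA (Ac A i) (Lc lam i) (J v₀) (Xv A lam i s J)
            = Bv A lam i s J v₀ := by
          rw [GKA_Xv, hTeq, hT, F2 v₀ hv₀pos (by omega)]
          norm_num
        right
        rw [hxval, hY v₀ hv₀pos, hGKA]
        exact ⟨(Bv_pos A lam i w4 w5 v₀ hv₀pos).le, le_refl _⟩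
    · -- v₀ = s
      have hv₀s' : v₀ = s := by omega
      subst hv₀s'
      have hT : (∑ v ∈ Finset.range (v₀+1),
          (if v₀ < v then (A (i (J v₀)) (i (J v)) : ℝ) * Yv A lam i v₀ J v else 0)) = 0 := by
        refine Finset.sum_eq_zero (fun v hv => ?_)
        rw [Finset.mem_range] at hv
        rw [if_neg (by omega)]
      have hGKA : GKA (Ac A i) (Lc lam i) (J v₀) (Xv A lam i v₀ J)
          = (lam (i (J v₀)) : ℝ) := by
        rw [GKA_Xv, hTeq, hT]
        ring
      right
      rw [hxval, hY v₀ w1, hGKA, Bv_last]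
      exact ⟨by exact_mod_cast w5.le, le_refl _⟩
  · -- k is not a walk position
    push_neg at hwk
    have hx0 : Xv A lam i s J k = 0 := Xv_non A lam i hwk
    have hTle : (∑ v ∈ Finset.range (s+1),
        (if k < J v then (A (i k) (i (J v)) : ℝ) * Yv A lam i s J v else 0))
        ≤ (lam (i k) : ℝ) := by
      by_cases hk0 : k < J 0
      · have hkv : ∀ v, v ≤ s → k < J v := by
          intro v hv
          rcases Nat.eq_zero_or_pos v with rfl | hvp
          · exact hk0
          · exact lt_trans hk0 (w2 0 v hvp hv)
        have hall : (∑ v ∈ Finset.range (s+1),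
            (if k < J v then (A (i k) (i (J v)) : ℝ) * Yv A lam i s J v else 0))
            = ∑ v ∈ Finset.range (s+1), (A (i k) (i (J v)) : ℝ) * Yv A lam i s J v := by
          refine Finset.sum_congr rfl (fun v hv => ?_)
          rw [Finset.mem_range] at hv
          rw [if_pos (hkv v (by omega))]
        rw [hall]
        by_cases hb : i k = i (J 1)
        · -- exact computation
          rcases Nat.lt_or_ge s 2 with hs2 | hs2
          · have hs1 : s = 1 := by omega
            subst hs1
            rw [Finset.sum_range_succ, Finset.sum_range_one, hY0, hY 1 le_rfl, w3, hb]
            have h2 : ((A (i (J 1)) (i (J 1)) : ℤ) : ℝ) = 2 := by rw [hdiag]; norm_num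
            rw [h2]
            have hL : Bv A lam i 1 J 1 = (lam (i (J 1)) : ℝ) := Bv_last A lam i
            linarith
          · have hsub : ∑ v ∈ Finset.range (s+1), (A (i k) (i (J v)) : ℝ) * Yv A lam i s J v
                = ∑ v ∈ Finset.range 3, (A (i k) (i (J v)) : ℝ) * Yv A lam i s J v := by
              symm
              refine Finset.sum_subset (by intro v hv; rw [Finset.mem_range] at *; omega) ?_
              intro v hv hv3
              rw [Finset.mem_range] at hv hv3
              rw [hb, Int.cast_eq_zero.2 (F3 1 v le_rfl (by omega) (by omega)), zero_mul]
            rw [hsub, Finset.sum_range_succ, Finset.sum_range_succ, Finset.sum_range_one,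
              hY0, hY 1 le_rfl, hY 2 (by omega), w3, hb]
            have h2 : ((A (i (J 1)) (i (J 1)) : ℤ) : ℝ) = 2 := by rw [hdiag]; norm_num
            have hstep := Bv_step A lam i (J := J) 1 (by omega : 1 < s)
            have h3 : ((A (i (J 1)) (i (J 2)) : ℤ) : ℝ) * Bv A lam i s J 2
                = -Bv A lam i s J 1 := by rw [hstep]; ring
            rw [h2, h3]
            have h4 : (0:ℝ) ≤ (lam (i (J 1)) : ℝ) := by exact_mod_cast hlam (i (J 1))
            linarith
        · -- all coefficients nonpositive after pairing 0 and 1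
          have hdec : ∑ v ∈ Finset.range (s+1), (A (i k) (i (J v)) : ℝ) * Yv A lam i s J v
              = (A (i k) (i (J 0)) : ℝ) * Yv A lam i s J 0
                + (A (i k) (i (J 1)) : ℝ) * Yv A lam i s J 1
                + ∑ v ∈ Finset.Ico 2 (s+1), (A (i k) (i (J v)) : ℝ) * Yv A lam i s J v := by
            rw [Finset.range_eq_Ico, Finset.sum_eq_sum_Ico_succ_bot (by omega : 0 < s+1),
              Finset.sum_eq_sum_Ico_succ_bot (by omega : 1 < s+1)]
            ring
          rw [hdec]
          have h01 : (A (i k) (i (J 0)) : ℝ) * Yv A lam i s J 0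
              + (A (i k) (i (J 1)) : ℝ) * Yv A lam i s J 1
              = (A (i k) (i (J 1)) : ℝ) * (Bv A lam i s J 1 / 2) := by
            rw [w3, hY0, hY 1 le_rfl]
            ring
          have h01le : (A (i k) (i (J 1)) : ℝ) * (Bv A lam i s J 1 / 2) ≤ 0 := by
            apply mul_nonpos_of_nonpos_of_nonneg
            · exact_mod_cast hoff _ _ hb
            · linarith
          have hrest : ∑ v ∈ Finset.Ico 2 (s+1),
              (A (i k) (i (J v)) : ℝ) * Yv A lam i s J v ≤ 0 := by
            refine Finset.sum_nonpos (fun v hv => ?_)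
            rw [Finset.mem_Ico] at hv
            have hne : i k ≠ i (J v) := F4 v (by omega) (by omega) k (hkv v (by omega))
            rw [hY v (by omega)]
            apply mul_nonpos_of_nonpos_of_nonneg
            · exact_mod_cast hoff _ _ hne
            · exact (Bv_pos A lam i w4 w5 v (by omega)).le
          have : (0:ℝ) ≤ (lam (i k) : ℝ) := by exact_mod_cast hlam (i k)
          rw [h01]
          linarith
      · -- J 0 < k
        have hJ0k : J 0 < k := lt_of_le_of_ne (not_lt.1 hk0) (hwk 0 (by omega))
        have hT0 : (∑ v ∈ Finset.range (s+1),
            (if k < J v then (A (i k) (i (J v)) : ℝ) * Yv A lam i s J v else 0)) ≤ 0 := by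
          refine Finset.sum_nonpos (fun v hv => ?_)
          rw [Finset.mem_range] at hv
          by_cases h : k < J v
          · rw [if_pos h]
            have hvpos : 1 ≤ v := by
              by_contra hv0
              push_neg at hv0
              interval_cases v
              exact absurd h hk0
            have hne : i k ≠ i (J v) := by
              rcases Nat.eq_or_lt_of_le hvpos with h1 | h1
              · rw [← h1] at h ⊢
                exact F5 k hJ0k h
              · exact F4 v (by omega) (by omega) k h
            rw [hY v hvpos]
            apply mul_nonpos_of_nonpos_of_nonneg
            · exact_mod_cast hoff _ _ hne
            · exact (Bv_pos A lam i w4 w5 v hvpos).le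
          · rw [if_neg h]
        have : (0:ℝ) ≤ (lam (i k) : ℝ) := by exact_mod_cast hlam (i k)
        linarith
    right
    rw [hx0, GKA_Xv]
    exact ⟨le_refl 0, by linarith⟩

end Construction

lemma not_untwisted_of_not_avoiding (hdiag : ∀ a, A a a = 2)
    (hoff : ∀ a b, a ≠ b → A a b ≤ 0) (hlam : ∀ a, 0 ≤ lam a)
    (hav : ¬ HesitantLambdaWalkAvoiding A lam i) :
    ¬ GKUntwisted (Ac A i) (Lc lam i) := by
  obtain ⟨s, J, ⟨w1, w2, w3, w4, w5⟩, F1, F2, F3, F4, F5⟩ :=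
    minimal_walk A lam i hoff hlam hav
  have hmem : Xv A lam i s J ∈ GKcube (Ac A i) (Lc lam i) :=
    Xv_mem A lam i hdiag hoff hlam w1 w2 w3 w4 w5 F2 F3 F4 F5
  have hB1 : 0 < Bv A lam i s J 1 := Bv_pos A lam i w4 w5 1 le_rfl
  have hx0neg : Xv A lam i s J (J 0) < 0 := by
    rw [Xv_walk A lam i w2 0 (by omega), Yv, if_pos rfl]
    linarith
  have hxnonneg : ∀ k : Fin n, k ≠ J 0 → 0 ≤ Xv A lam i s J k := by
    intro k hk
    by_cases hwk : ∃ v, v ≤ s ∧ J v = k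
    · obtain ⟨v, hv, rfl⟩ := hwk
      have hv1 : 1 ≤ v := by
        rcases Nat.eq_zero_or_pos v with rfl | h
        · exact absurd rfl hk
        · exact h
      rw [Xv_walk A lam i w2 v hv, Yv, if_neg (by omega)]
      exact (Bv_pos A lam i w4 w5 v hv1).le
    · push_neg at hwk
      rw [Xv_non A lam i hwk]
  rintro ⟨_, _, _, hρ⟩
  have h1 := hρ _ hmem
  have h2 : GKrho (Ac A i) (Lc lam i) (Xv A lam i s J) = -1 := by
    simp only [GKrho, if_pos hmem]
    have hprod : ∏ k : Fin n, GKsgn (Xv A lam i s J k) = (-1 : ℝ)^(n-1) := by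
      rw [← Finset.mul_prod_erase Finset.univ _ (Finset.mem_univ (J 0))]
      have hs1 : GKsgn (Xv A lam i s J (J 0)) = 1 := by rw [GKsgn, if_pos hx0neg]
      have hrest : ∀ k ∈ Finset.univ.erase (J 0), GKsgn (Xv A lam i s J k) = -1 := by
        intro k hk
        rw [GKsgn, if_neg (not_lt.2 (hxnonneg k (Finset.mem_erase.1 hk).1))]
      rw [hs1, one_mul, Finset.prod_congr rfl hrest, Finset.prod_const,
        Finset.card_erase_of_mem (Finset.mem_univ _), Finset.card_univ, Fintype.card_fin]
    rw [hprod]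
    have hn : 1 ≤ n := (J 0).pos
    have he : n + (n-1) = 2*(n-1) + 1 := by omega
    rw [← pow_add, he, pow_succ, pow_mul]
    norm_num
  rw [h1] at h2
  norm_num at h2

end GKProof

/-- Main theorem.  Let `A` be the Cartan matrix of a complex
semisimple Lie algebra of rank `r`, `i = (i_1,…,i_n)` a word with entries in
`{1,…,r}`, and `λ` a dominant weight.  With `c_{jk} = A_{i_j i_k}` and
`ℓ_j = λ_{i_j}`, the Grossberg–Karshon twisted cube `(C(c,ℓ), ρ)` is untwisted
if and only if `i` is hesitant-`λ`-walk-avoiding. -/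
theorem statement5 {r n : ℕ} (A : Matrix (Fin r) (Fin r) ℤ)
    (hA : IsCartanMatrix A) (lam : Fin r → ℤ) (hlam : ∀ a, 0 ≤ lam a)
    (i : Fin n → Fin r) :
    GKUntwisted (fun j k => A (i j) (i k)) (fun j => lam (i j)) ↔
      HesitantLambdaWalkAvoiding A lam i := by
  constructor
  · intro hu
    by_contra hav
    exact GKProof.not_untwisted_of_not_avoiding A lam i hA.1 hA.2.1 hlam hav hu
  · intro hav
    exact GKProof.untwisted_of_avoiding A lam i hA.2.1 hlam hav
end
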